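/- arXiv:2210.05537 — 2 statements merged into one kernel-verified Lean document; each statement's English description precedes it below -/
import Mathlib

section
/- Fix k ≥ 2 and let u, t be types in 𝒯_k. If the generating series C_u is aperiodic and ∂F_t/∂C_u ≠ 0 (i.e. there is an edge u → t in the dependency graph G_k), then C_t is aperiodic. -/
open FirstOrder Filter Asymptotics Topology

namespace Av231

/-- Relation symbols of the theory of two orders: two binary relations `<_P` and `<_V`. -/
inductive TwoRel : ℕ → Type
  | lp : TwoRel 2
  | lv : TwoRel 2

/-- The first-order language with two binary relation symbols `<_P` and `<_V`. -/
def L : Language := ⟨fun _ => Empty, TwoRel⟩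

/-- The `L`-structure on `Fin n` associated with a permutation `σ` of `{1,…,n}`:
`i <_P j` iff `i < j` and `i <_V j` iff `σ i < σ j`. -/
def pStruct {n : ℕ} (σ : Equiv.Perm (Fin n)) : L.Structure (Fin n) where
  funMap := fun f _ => nomatch f
  RelMap := fun r x =>
    match r with
    | .lp => x 0 < x 1
    | .lv => σ (x 0) < σ (x 1)

/-- A permutation satisfies a first-order sentence. -/
def Sat {n : ℕ} (σ : Equiv.Perm (Fin n)) (ψ : L.Sentence) : Prop :=
  @Language.Sentence.Realize L (Fin n) (pStruct σ) ψ

/-- The quantifier depth of a first-order formula. -/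
def qd {L' : Language} {α : Type*} : ∀ {n : ℕ}, L'.BoundedFormula α n → ℕ
  | _, .falsum => 0
  | _, .equal _ _ => 0
  | _, .rel _ _ => 0
  | _, .imp f g => max (qd f) (qd g)
  | _, .all f => qd f + 1

/-- A permutation avoids the pattern `231`. -/
def Avoids {n : ℕ} (σ : Equiv.Perm (Fin n)) : Prop :=
  ¬ ∃ i j k : Fin n, i < j ∧ j < k ∧ σ k < σ i ∧ σ i < σ j

/-- The number of `231`-avoiding permutations of size `n` satisfying `ψ`. -/
noncomputable def avN (n : ℕ) (ψ : L.Sentence) : ℕ :=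
  Nat.card {σ : Equiv.Perm (Fin n) // Avoids σ ∧ Sat σ ψ}

/-- The probability that a uniform random `231`-avoiding permutation of size `n`
satisfies `ψ` (the number of `231`-avoiding permutations of size `n` is `catalan n`). -/
noncomputable def prob (n : ℕ) (ψ : L.Sentence) : ℝ :=
  (avN n ψ : ℝ) / (catalan n : ℝ)

/-- Permutations of arbitrary finite size. -/
abbrev FinPerm := Σ n : ℕ, Equiv.Perm (Fin n)

def AvoidsF (p : FinPerm) : Prop := Avoids p.2

/-- Direct sum of permutations. -/
def dsum {a b : ℕ} (σ : Equiv.Perm (Fin a)) (τ : Equiv.Perm (Fin b)) :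
    Equiv.Perm (Fin (a + b)) :=
  finSumFinEquiv.permCongr (Equiv.sumCongr σ τ)

/-- Skew sum of permutations. -/
def ssum {a b : ℕ} (σ : Equiv.Perm (Fin a)) (τ : Equiv.Perm (Fin b)) :
    Equiv.Perm (Fin (a + b)) :=
  finSumFinEquiv.symm.trans ((Equiv.sumCongr σ τ).trans
    ((Equiv.sumComm (Fin a) (Fin b)).trans (finSumFinEquiv.trans (finCongr (Nat.add_comm b a)))))

/-- The operation `(τ, π) ↦ τ ⊕ (1 ⊖ π)` on permutations of arbitrary sizes. -/
def glue (τ π : FinPerm) : FinPerm :=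
  ⟨τ.1 + (1 + π.1), dsum τ.2 (ssum (1 : Equiv.Perm (Fin 1)) π.2)⟩

/-- Two permutations are `k`-equivalent when they satisfy the same first-order sentences
of quantifier depth at most `k`. -/
def kEquiv (k : ℕ) (p q : FinPerm) : Prop :=
  ∀ ψ : L.Sentence, qd ψ ≤ k → (Sat p.2 ψ ↔ Sat q.2 ψ)

end Av231

/-- `k`-equivalence as a setoid on finite permutations. -/
def kSetoid (k : ℕ) : Setoid Av231.FinPerm :=
  ⟨Av231.kEquiv k,
    ⟨fun _ _ _ => Iff.rfl, fun h ψ hψ => (h ψ hψ).symm,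
      fun h h' ψ hψ => (h ψ hψ).trans (h' ψ hψ)⟩⟩

namespace Av231

/-- Logical types of order `k`: equivalence classes of `≡ₖ`. -/
def QT (k : ℕ) := Quotient (kSetoid k)

/-- The logical type of order `k` of a permutation. -/
def typeOf (k : ℕ) (p : FinPerm) : QT k := Quotient.mk (kSetoid k) p

/-- A type is realized when some `231`-avoiding permutation has this type;
`𝒯ₖ` consists of the realized types. -/
def Realized (k : ℕ) (t : QT k) : Prop := ∃ p : FinPerm, AvoidsF p ∧ typeOf k p = t

/-- The number of `231`-avoiding permutations of size `n` whose logical type of order `k`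
is `t`, i.e. the `n`-th coefficient of the generating series `C_t`. -/
noncomputable def cnt (k : ℕ) (t : QT k) (n : ℕ) : ℕ :=
  Nat.card {σ : Equiv.Perm (Fin n) // Avoids σ ∧ typeOf k ⟨n, σ⟩ = t}

/-- The type of the empty permutation. -/
def emptyType (k : ℕ) : QT k := typeOf k ⟨0, 1⟩

/-- `H_k(t₁,t₂)`: the type of `τ ⊕ (1 ⊖ π)` where `τ, π` are representatives
of `t₁, t₂` respectively. -/
noncomputable def Hfun (k : ℕ) (t₁ t₂ : QT k) : QT k :=
  typeOf k (glue (Quotient.out t₁) (Quotient.out t₂))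

/-- The edge relation `u → t` of the dependency graph `G_k`:
`∂F_t/∂C_u ≠ 0`, i.e. some `v ∈ 𝒯ₖ` satisfies `H_k(u,v) = t` or `H_k(v,u) = t`. -/
def Edge (k : ℕ) (u t : QT k) : Prop :=
  ∃ v : QT k, Realized k v ∧ (Hfun k u v = t ∨ Hfun k v u = t)

/-- The set `𝒯ₖ` of types realized by `231`-avoiding permutations, as a type. -/
def Tk (k : ℕ) := {t : QT k // Realized k t}

/-- The edge relation of `G_k` restricted to `𝒯ₖ`. -/
def EdgeT (k : ℕ) (u t : Tk k) : Prop := Edge k u.1 t.1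

/-- `S` is a terminal strongly connected component of the dependency graph `G_k`:
it is nonempty, any vertex of `S` reaches any other, and no edge leaves `S`
(this forces maximality, hence being an SCC). -/
def IsTermSCC (k : ℕ) (S : Set (Tk k)) : Prop :=
  S.Nonempty ∧ (∀ u ∈ S, ∀ v ∈ S, Relation.ReflTransGen (EdgeT k) u v) ∧
    (∀ u ∈ S, ∀ v : Tk k, EdgeT k u v → v ∈ S)

/-- A sequence of coefficients is periodic when, for some `d ≥ 2` and `r`,
it vanishes outside `dℤ + r`. -/
def SeqPeriodic (a : ℕ → ℝ) : Prop :=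
  ∃ d : ℕ, 2 ≤ d ∧ ∃ r : ℕ, ∀ n : ℕ, n % d ≠ r % d → a n = 0

/-- The generating series `C_t` of `231`-avoiding permutations of type `t`,
evaluated at a complex number `z`. -/
noncomputable def Ct (k : ℕ) (t : QT k) (z : ℂ) : ℂ :=
  ∑' n : ℕ, (cnt k t n : ℂ) * z ^ n

/-- The Catalan generating function. -/
noncomputable def catGF (z : ℂ) : ℂ := ∑' n : ℕ, (catalan n : ℂ) * z ^ n

/-- The entry `M_k(z)_{t,u} = ∂F_t/∂C_u (z; C_v(z), v ∈ 𝒯ₖ)` of the Jacobian matrix of the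
type-refined system. -/
noncomputable def Mmat (k : ℕ) (z : ℂ) (t u : QT k) : ℂ :=
  z * ((∑' v : {v : QT k // Realized k v ∧ Hfun k u v = t}, Ct k v.1 z) +
       (∑' v : {v : QT k // Realized k v ∧ Hfun k v u = t}, Ct k v.1 z))

/-- `lam` is an eigenvalue of the (possibly infinite) matrix `A`, witnessed by a finitely
supported eigenvector. For finite index types this is the usual notion of eigenvalue. -/
def IsEig {α : Type*} (A : α → α → ℂ) (lam : ℂ) : Prop :=
  ∃ v : α →₀ ℂ, v ≠ 0 ∧ ∀ x : α, ∑ y ∈ v.support, A x y * v y = lam * v x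


/-! ### Ehrenfeucht–Fraïssé machinery -/

section EF

variable {n n' : ℕ}

/-- Partial-isomorphism condition for a list of paired elements. -/
def PIso (σ : Equiv.Perm (Fin n)) (σ' : Equiv.Perm (Fin n'))
    (l : List (Fin n × Fin n')) : Prop :=
  ∀ p ∈ l, ∀ q ∈ l, (p.1 = q.1 ↔ p.2 = q.2) ∧ (p.1 < q.1 ↔ p.2 < q.2) ∧
    (σ p.1 < σ q.1 ↔ σ' p.2 < σ' q.2)

/-- Duplicator wins the `k`-round EF game from position `l`. -/
def EF (σ : Equiv.Perm (Fin n)) (σ' : Equiv.Perm (Fin n')) :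
    ℕ → List (Fin n × Fin n') → Prop
  | 0, l => PIso σ σ' l
  | k+1, l => PIso σ σ' l ∧ (∀ a, ∃ b, EF σ σ' k ((a, b) :: l)) ∧
      (∀ b, ∃ a, EF σ σ' k ((a, b) :: l))

variable {σ : Equiv.Perm (Fin n)} {σ' : Equiv.Perm (Fin n')}

theorem EF_piso {k : ℕ} {l : List (Fin n × Fin n')} (h : EF σ σ' k l) : PIso σ σ' l := by
  cases k with
  | zero => exact h
  | succ k => exact h.1

theorem EF_congr : ∀ (k : ℕ) {l l' : List (Fin n × Fin n')},
    (∀ p, p ∈ l ↔ p ∈ l') → EF σ σ' k l → EF σ σ' k l'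
  | 0, l, l', hll, h => fun p hp q hq => h p ((hll p).2 hp) q ((hll q).2 hq)
  | k+1, l, l', hll, h => by
    refine ⟨fun p hp q hq => h.1 p ((hll p).2 hp) q ((hll q).2 hq), ?_, ?_⟩
    · intro a
      obtain ⟨b, hb⟩ := h.2.1 a
      exact ⟨b, EF_congr k (fun p => by simp [hll p]) hb⟩
    · intro b
      obtain ⟨a, ha⟩ := h.2.2 b
      exact ⟨a, EF_congr k (fun p => by simp [hll p]) ha⟩

theorem EF_mono : ∀ (k : ℕ) {l : List (Fin n × Fin n')}, EF σ σ' (k+1) l → EF σ σ' k l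
  | 0, _, h => h.1
  | k+1, l, h =>
    ⟨h.1, fun a => (h.2.1 a).imp fun _ hb => EF_mono k hb,
      fun b => (h.2.2 b).imp fun _ ha => EF_mono k ha⟩

theorem EF_refl (σ : Equiv.Perm (Fin n)) :
    ∀ (k : ℕ) (l : List (Fin n × Fin n)), (∀ p ∈ l, p.1 = p.2) → EF σ σ k l := by
  intro k
  induction k with
  | zero =>
    intro l hl p hp q hq
    rw [hl p hp, hl q hq]
    exact ⟨Iff.rfl, Iff.rfl, Iff.rfl⟩
  | succ k ih =>
    intro l hl
    have hl' : ∀ a : Fin n, ∀ p ∈ ((a, a) :: l), p.1 = p.2 := by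
      intro a p hp
      rcases List.mem_cons.mp hp with rfl | hp
      · rfl
      · exact hl p hp
    refine ⟨?_, fun a => ⟨a, ih _ (hl' a)⟩, fun a => ⟨a, ih _ (hl' a)⟩⟩
    intro p hp q hq
    rw [hl p hp, hl q hq]
    exact ⟨Iff.rfl, Iff.rfl, Iff.rfl⟩

theorem term_exists_var {m : ℕ} (t : L.Term (Empty ⊕ Fin m)) :
    ∃ i : Fin m, t = FirstOrder.Language.Term.var (Sum.inr i) := by
  cases t with
  | var v =>
    cases v with
    | inl e => exact e.elim
    | inr i => exact ⟨i, rfl⟩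
  | func f _ => exact (f : Empty).elim

theorem snoc_pair_mem {m : ℕ} {l : List (Fin n × Fin n')} {xs : Fin m → Fin n}
    {ys : Fin m → Fin n'} (h : ∀ i, (xs i, ys i) ∈ l) (a : Fin n) (b : Fin n') :
    ∀ i : Fin (m+1), ((Fin.snoc xs a : Fin (m+1) → Fin n) i, (Fin.snoc ys b : Fin (m+1) → Fin n') i) ∈ ((a, b) :: l) := by
  intro i
  refine Fin.lastCases ?_ ?_ i
  · simp
  · intro j
    simp only [Fin.snoc_castSucc]
    exact List.mem_cons_of_mem _ (h j)

/-- EF-equivalence implies agreement on formulas of bounded quantifier depth. -/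
theorem EF_realize : ∀ {m : ℕ} (φ : L.BoundedFormula Empty m) (k : ℕ), qd φ ≤ k →
    ∀ (l : List (Fin n × Fin n')), EF σ σ' k l →
    ∀ (v : Empty → Fin n) (v' : Empty → Fin n')
      (xs : Fin m → Fin n) (ys : Fin m → Fin n'), (∀ i, (xs i, ys i) ∈ l) →
    (@Language.BoundedFormula.Realize L _ (pStruct σ) Empty m φ v xs ↔
     @Language.BoundedFormula.Realize L _ (pStruct σ') Empty m φ v' ys) := by
  intro m φ
  induction φ with
  | falsum => exact fun _ _ _ _ _ _ _ _ _ => Iff.rfl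
  | equal t₁ t₂ =>
    intro k _ l hEF v v' xs ys hmem
    obtain ⟨i, rfl⟩ := term_exists_var t₁
    obtain ⟨j, rfl⟩ := term_exists_var t₂
    have := (EF_piso hEF) _ (hmem i) _ (hmem j)
    exact this.1
  | rel R ts =>
    intro k _ l hEF v v' xs ys hmem
    cases R with
    | lp =>
      obtain ⟨i, hi⟩ := term_exists_var (ts 0)
      obtain ⟨j, hj⟩ := term_exists_var (ts 1)
      have hp := (EF_piso hEF) _ (hmem i) _ (hmem j)
      show (pStruct σ).RelMap TwoRel.lp _ ↔ (pStruct σ').RelMap TwoRel.lp _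
      show @Language.Term.realize L _ (pStruct σ) _ (Sum.elim v xs) (ts 0) <
          @Language.Term.realize L _ (pStruct σ) _ (Sum.elim v xs) (ts 1) ↔
        @Language.Term.realize L _ (pStruct σ') _ (Sum.elim v' ys) (ts 0) <
          @Language.Term.realize L _ (pStruct σ') _ (Sum.elim v' ys) (ts 1)
      rw [hi, hj]
      exact hp.2.1
    | lv =>
      obtain ⟨i, hi⟩ := term_exists_var (ts 0)
      obtain ⟨j, hj⟩ := term_exists_var (ts 1)
      have hp := (EF_piso hEF) _ (hmem i) _ (hmem j)
      show (pStruct σ).RelMap TwoRel.lv _ ↔ (pStruct σ').RelMap TwoRel.lv _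
      show σ (@Language.Term.realize L _ (pStruct σ) _ (Sum.elim v xs) (ts 0)) <
          σ (@Language.Term.realize L _ (pStruct σ) _ (Sum.elim v xs) (ts 1)) ↔
        σ' (@Language.Term.realize L _ (pStruct σ') _ (Sum.elim v' ys) (ts 0)) <
          σ' (@Language.Term.realize L _ (pStruct σ') _ (Sum.elim v' ys) (ts 1))
      rw [hi, hj]
      exact hp.2.2
  | imp f g ihf ihg =>
    intro k hq l hEF v v' xs ys hmem
    have h1 : qd f ≤ k := le_trans (le_max_left _ _) hq
    have h2 : qd g ≤ k := le_trans (le_max_right _ _) hq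
    exact imp_congr (ihf k h1 l hEF v v' xs ys hmem) (ihg k h2 l hEF v v' xs ys hmem)
  | all f ih =>
    intro k hq l hEF v v' xs ys hmem
    have hk : qd f + 1 ≤ k := hq
    obtain ⟨k', rfl⟩ : ∃ k', k = k' + 1 := ⟨k - 1, by omega⟩
    have hqf : qd f ≤ k' := by omega
    constructor
    · intro h b
      obtain ⟨a, ha⟩ := hEF.2.2 b
      exact (ih k' hqf _ ha v v' _ _ (snoc_pair_mem hmem a b)).1 (h a)
    · intro h a
      obtain ⟨b, hb⟩ := hEF.2.1 a
      exact (ih k' hqf _ hb v v' _ _ (snoc_pair_mem hmem a b)).2 (h b)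

theorem EF_sat {k : ℕ} {l : List (Fin n × Fin n')} (h : EF σ σ' k l)
    (ψ : L.Sentence) (hq : qd ψ ≤ k) : Sat σ ψ ↔ Sat σ' ψ :=
  EF_realize ψ k hq l h default default default default (fun i => i.elim0)

end EF

/-! ### Hintikka formulas -/

section Hintikka

open FirstOrder.Language

variable {n n' : ℕ}

/-- Finite conjunction of a list of bounded formulas. -/
def conjL {m : ℕ} (l : List (L.BoundedFormula Empty m)) : L.BoundedFormula Empty m :=
  l.foldr (· ⊓ ·) ⊤

/-- Finite disjunction of a list of bounded formulas. -/
def disjL {m : ℕ} (l : List (L.BoundedFormula Empty m)) : L.BoundedFormula Empty m :=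
  l.foldr (· ⊔ ·) ⊥

theorem qd_not {m : ℕ} (φ : L.BoundedFormula Empty m) : qd φ.not = qd φ := by
  show max (qd φ) (qd (⊥ : L.BoundedFormula Empty m)) = qd φ
  show max (qd φ) 0 = qd φ
  omega

theorem qd_inf {m : ℕ} (φ ψ : L.BoundedFormula Empty m) :
    qd (φ ⊓ ψ) = max (qd φ) (qd ψ) := by
  show qd ((φ.imp ψ.not).not) = _
  rw [qd_not]
  show max (qd φ) (qd ψ.not) = _
  rw [qd_not]

theorem qd_sup {m : ℕ} (φ ψ : L.BoundedFormula Empty m) :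
    qd (φ ⊔ ψ) = max (qd φ) (qd ψ) := by
  show max (qd φ.not) (qd ψ) = _
  rw [qd_not]

theorem qd_ex {m : ℕ} (φ : L.BoundedFormula Empty (m + 1)) : qd φ.ex = qd φ + 1 := by
  show qd φ.not.all.not = _
  rw [qd_not]
  show qd φ.not + 1 = _
  rw [qd_not]

theorem qd_top {m : ℕ} : qd (⊤ : L.BoundedFormula Empty m) = 0 := rfl

theorem qd_conjL {m c : ℕ} {l : List (L.BoundedFormula Empty m)}
    (h : ∀ φ ∈ l, qd φ ≤ c) : qd (conjL l) ≤ c := by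
  induction l with
  | nil => simp [conjL, qd_top]
  | cons φ t ih =>
    rw [conjL, List.foldr_cons]
    rw [show (List.foldr (· ⊓ ·) ⊤ t) = conjL t from rfl, qd_inf]
    exact max_le (h φ (by simp)) (ih fun ψ hψ => h ψ (List.mem_cons_of_mem _ hψ))

theorem qd_disjL {m c : ℕ} {l : List (L.BoundedFormula Empty m)}
    (h : ∀ φ ∈ l, qd φ ≤ c) : qd (disjL l) ≤ c := by
  induction l with
  | nil => simp [disjL]; show (0:ℕ) ≤ c; omega
  | cons φ t ih =>
    rw [disjL, List.foldr_cons]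
    rw [show (List.foldr (· ⊔ ·) ⊥ t) = disjL t from rfl, qd_sup]
    exact max_le (h φ (by simp)) (ih fun ψ hψ => h ψ (List.mem_cons_of_mem _ hψ))

theorem realize_conjL {M : Type} [L.Structure M] {m : ℕ}
    (l : List (L.BoundedFormula Empty m)) (v : Empty → M) (xs : Fin m → M) :
    (conjL l).Realize v xs ↔ ∀ φ ∈ l, φ.Realize v xs := by
  induction l with
  | nil => simp [conjL]
  | cons φ t ih =>
    rw [conjL, List.foldr_cons, show (List.foldr (· ⊓ ·) ⊤ t) = conjL t from rfl]
    simp [BoundedFormula.realize_inf, ih]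

theorem realize_disjL {M : Type} [L.Structure M] {m : ℕ}
    (l : List (L.BoundedFormula Empty m)) (v : Empty → M) (xs : Fin m → M) :
    (disjL l).Realize v xs ↔ ∃ φ ∈ l, φ.Realize v xs := by
  induction l with
  | nil => simp [disjL]
  | cons φ t ih =>
    rw [disjL, List.foldr_cons, show (List.foldr (· ⊔ ·) ⊥ t) = disjL t from rfl]
    simp [BoundedFormula.realize_sup, ih]

/-- Atomic formula asserting equality of the `i`-th and `j`-th marked points. -/
def eqF {m : ℕ} (i j : Fin m) : L.BoundedFormula Empty m :=
  Term.bdEqual (Term.var (Sum.inr i)) (Term.var (Sum.inr j))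

/-- Atomic formula relating the `i`-th and `j`-th marked points. -/
def relF {m : ℕ} (R : TwoRel 2) (i j : Fin m) : L.BoundedFormula Empty m :=
  BoundedFormula.rel (L := L) R ![Term.var (Sum.inr i), Term.var (Sum.inr j)]

/-- A literal or its negation, according to a decidable condition. -/
def lit {m : ℕ} (c : Prop) [Decidable c] (φ : L.BoundedFormula Empty m) :
    L.BoundedFormula Empty m :=
  if c then φ else φ.not

theorem qd_lit {m : ℕ} (c : Prop) [Decidable c] (φ : L.BoundedFormula Empty m) :
    qd (lit c φ) = qd φ := by
  rw [lit]
  split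
  · rfl
  · exact qd_not φ

theorem realize_eqF (σ' : Equiv.Perm (Fin n')) {m : ℕ} (i j : Fin m)
    (v : Empty → Fin n') (ys : Fin m → Fin n') :
    @BoundedFormula.Realize L _ (pStruct σ') Empty m (eqF i j) v ys ↔ ys i = ys j := by
  letI := pStruct σ'
  simp [eqF, BoundedFormula.realize_bdEqual]

theorem realize_relF_lp (σ' : Equiv.Perm (Fin n')) {m : ℕ} (i j : Fin m)
    (v : Empty → Fin n') (ys : Fin m → Fin n') :
    @BoundedFormula.Realize L _ (pStruct σ') Empty m (relF .lp i j) v ys ↔ ys i < ys j :=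
  Iff.rfl

theorem realize_relF_lv (σ' : Equiv.Perm (Fin n')) {m : ℕ} (i j : Fin m)
    (v : Empty → Fin n') (ys : Fin m → Fin n') :
    @BoundedFormula.Realize L _ (pStruct σ') Empty m (relF .lv i j) v ys ↔
      σ' (ys i) < σ' (ys j) :=
  Iff.rfl

theorem realize_lit (σ' : Equiv.Perm (Fin n')) {m : ℕ} (c : Prop) [Decidable c]
    (φ : L.BoundedFormula Empty m) (v : Empty → Fin n') (ys : Fin m → Fin n') :
    @BoundedFormula.Realize L _ (pStruct σ') Empty m (lit c φ) v ys ↔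
      (c ↔ @BoundedFormula.Realize L _ (pStruct σ') Empty m φ v ys) := by
  letI := pStruct σ'
  by_cases h : c
  · rw [lit, if_pos h]; simp [h]
  · rw [lit, if_neg h, BoundedFormula.realize_not]; simp [h]

end Hintikka

section Hintikka2

open FirstOrder.Language

variable {n n' : ℕ}

/-- The atomic description of a marked tuple in a permutation. -/
def atomF (σ : Equiv.Perm (Fin n)) {m : ℕ} (xs : Fin m → Fin n) :
    L.BoundedFormula Empty m :=
  conjL (List.ofFn fun i => conjL (List.ofFn fun j =>
    lit (xs i = xs j) (eqF i j) ⊓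
      (lit (xs i < xs j) (relF .lp i j) ⊓ lit (σ (xs i) < σ (xs j)) (relF .lv i j))))

theorem qd_atomF (σ : Equiv.Perm (Fin n)) {m : ℕ} (xs : Fin m → Fin n) :
    qd (atomF σ xs) = 0 := by
  refine Nat.le_zero.mp (qd_conjL ?_)
  intro φ hφ
  rw [List.mem_ofFn] at hφ
  obtain ⟨i, rfl⟩ := hφ
  refine qd_conjL ?_
  intro φ hφ
  rw [List.mem_ofFn] at hφ
  obtain ⟨j, rfl⟩ := hφ
  rw [qd_inf, qd_inf, qd_lit, qd_lit, qd_lit]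
  simp [eqF, relF, qd, Term.bdEqual]

theorem realize_atomF (σ : Equiv.Perm (Fin n)) (σ' : Equiv.Perm (Fin n')) {m : ℕ}
    (xs : Fin m → Fin n) (v : Empty → Fin n') (ys : Fin m → Fin n') :
    @BoundedFormula.Realize L _ (pStruct σ') Empty m (atomF σ xs) v ys ↔
      PIso σ σ' (List.ofFn fun i => (xs i, ys i)) := by
  letI := pStruct σ'
  rw [atomF, realize_conjL]
  constructor
  · intro h p hp q hq
    rw [List.mem_ofFn] at hp hq
    obtain ⟨i, rfl⟩ := hp
    obtain ⟨j, rfl⟩ := hq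
    have hi := h _ (by rw [List.mem_ofFn]; exact ⟨i, rfl⟩)
    rw [realize_conjL] at hi
    have hij := hi _ (by rw [List.mem_ofFn]; exact ⟨j, rfl⟩)
    rw [BoundedFormula.realize_inf, BoundedFormula.realize_inf,
      realize_lit, realize_lit, realize_lit, realize_eqF, realize_relF_lp,
      realize_relF_lv] at hij
    exact hij
  · intro h φ hφ
    rw [List.mem_ofFn] at hφ
    obtain ⟨i, rfl⟩ := hφ
    rw [realize_conjL]
    intro φ hφ
    rw [List.mem_ofFn] at hφ
    obtain ⟨j, rfl⟩ := hφ
    have hij := h _ (by rw [List.mem_ofFn]; exact ⟨i, rfl⟩)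
      _ (by rw [List.mem_ofFn]; exact ⟨j, rfl⟩)
    rw [BoundedFormula.realize_inf, BoundedFormula.realize_inf,
      realize_lit, realize_lit, realize_lit, realize_eqF, realize_relF_lp,
      realize_relF_lv]
    exact hij

/-- Hintikka formula: characterizes the `k`-round EF-type of a marked permutation. -/
def hin (σ : Equiv.Perm (Fin n)) : ℕ → {m : ℕ} → (Fin m → Fin n) → L.BoundedFormula Empty m
  | 0, _, xs => atomF σ xs
  | k+1, _, xs =>
    atomF σ xs ⊓
      (conjL ((List.finRange n).map fun a =>
          (hin σ k (Fin.snoc xs a : Fin _ → Fin n)).ex) ⊓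
        (disjL ((List.finRange n).map fun a =>
          hin σ k (Fin.snoc xs a : Fin _ → Fin n))).all)

theorem qd_hin (σ : Equiv.Perm (Fin n)) : ∀ (k : ℕ) {m : ℕ} (xs : Fin m → Fin n),
    qd (hin σ k xs) ≤ k := by
  intro k
  induction k with
  | zero => intro m xs; exact le_of_eq (qd_atomF σ xs)
  | succ k ih =>
    intro m xs
    rw [hin, qd_inf, qd_inf, qd_atomF]
    refine max_le (by omega) (max_le (qd_conjL ?_) ?_)
    · intro φ hφ
      rw [List.mem_map] at hφ
      obtain ⟨a, _, rfl⟩ := hφ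
      rw [qd_ex]
      exact Nat.succ_le_succ (ih _)
    · show qd (disjL _) + 1 ≤ k + 1
      refine Nat.succ_le_succ (qd_disjL ?_)
      intro φ hφ
      rw [List.mem_map] at hφ
      obtain ⟨a, _, rfl⟩ := hφ
      exact ih _

theorem mem_ofFn_snoc {m : ℕ} (xs : Fin m → Fin n) (ys : Fin m → Fin n')
    (a : Fin n) (b : Fin n') (p : Fin n × Fin n') :
    p ∈ List.ofFn (fun i : Fin (m+1) =>
        ((Fin.snoc xs a : Fin (m+1) → Fin n) i, (Fin.snoc ys b : Fin (m+1) → Fin n') i)) ↔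
      p ∈ ((a, b) :: List.ofFn fun i => (xs i, ys i)) := by
  simp only [List.mem_ofFn, Set.mem_range, List.mem_cons]
  constructor
  · rintro ⟨i, rfl⟩
    refine Fin.lastCases ?_ ?_ i
    · left; simp
    · intro j; right; exact ⟨j, by simp⟩
  · rintro (rfl | ⟨i, rfl⟩)
    · exact ⟨Fin.last m, by simp⟩
    · exact ⟨i.castSucc, by simp⟩

theorem realize_hin (σ : Equiv.Perm (Fin n)) (σ' : Equiv.Perm (Fin n')) :
    ∀ (k : ℕ) {m : ℕ} (xs : Fin m → Fin n) (v : Empty → Fin n') (ys : Fin m → Fin n'),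
    @BoundedFormula.Realize L _ (pStruct σ') Empty m (hin σ k xs) v ys ↔
      EF σ σ' k (List.ofFn fun i => (xs i, ys i)) := by
  intro k
  induction k with
  | zero => intro m xs v ys; rw [hin]; exact realize_atomF σ σ' xs v ys
  | succ k ih =>
    intro m xs v ys
    letI := pStruct σ'
    rw [hin, BoundedFormula.realize_inf, BoundedFormula.realize_inf,
      realize_atomF σ σ' xs v ys]
    show _ ↔ EF σ σ' (k+1) _
    rw [show EF σ σ' (k+1) (List.ofFn fun i => (xs i, ys i)) =
      (PIso σ σ' (List.ofFn fun i => (xs i, ys i)) ∧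
        (∀ a, ∃ b, EF σ σ' k ((a, b) :: List.ofFn fun i => (xs i, ys i))) ∧
        (∀ b, ∃ a, EF σ σ' k ((a, b) :: List.ofFn fun i => (xs i, ys i)))) from rfl]
    refine and_congr Iff.rfl (and_congr ?_ ?_)
    · rw [realize_conjL]
      constructor
      · intro h a
        have := h _ (List.mem_map.mpr ⟨a, List.mem_finRange a, rfl⟩)
        rw [BoundedFormula.realize_ex] at this
        obtain ⟨b, hb⟩ := this
        rw [ih] at hb
        exact ⟨b, EF_congr k (mem_ofFn_snoc xs ys a b) hb⟩
      · intro h φ hφ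
        rw [List.mem_map] at hφ
        obtain ⟨a, _, rfl⟩ := hφ
        obtain ⟨b, hb⟩ := h a
        rw [BoundedFormula.realize_ex]
        exact ⟨b, (ih _ v _).mpr
          (EF_congr k (fun p => (mem_ofFn_snoc xs ys a b p).symm) hb)⟩
    · rw [BoundedFormula.realize_all]
      constructor
      · intro h b
        have := h b
        rw [realize_disjL] at this
        obtain ⟨φ, hφ, hr⟩ := this
        rw [List.mem_map] at hφ
        obtain ⟨a, _, rfl⟩ := hφ
        rw [ih] at hr
        exact ⟨a, EF_congr k (mem_ofFn_snoc xs ys a b) hr⟩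
      · intro h b
        obtain ⟨a, ha⟩ := h b
        rw [realize_disjL]
        exact ⟨_, List.mem_map.mpr ⟨a, List.mem_finRange a, rfl⟩,
          (ih _ v _).mpr (EF_congr k (fun p => (mem_ofFn_snoc xs ys a b p).symm) ha)⟩

theorem kEquiv_EF {σ : Equiv.Perm (Fin n)} {σ' : Equiv.Perm (Fin n')} (k : ℕ)
    (h : kEquiv k ⟨n, σ⟩ ⟨n', σ'⟩) : EF σ σ' k [] := by
  have hq : qd (hin σ k (default : Fin 0 → Fin n)) ≤ k := qd_hin σ k _
  have h1 : Sat σ (hin σ k (default : Fin 0 → Fin n)) := by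
    show @BoundedFormula.Realize L _ (pStruct σ) Empty 0 _ default default
    rw [realize_hin σ σ k default default default]
    rw [show (List.ofFn fun i : Fin 0 => ((default : Fin 0 → Fin n) i,
      (default : Fin 0 → Fin n) i)) = [] by simp]
    exact EF_refl σ k [] (by simp)
  have h2 := (h _ hq).mp h1
  have h3 : @BoundedFormula.Realize L _ (pStruct σ') Empty 0
      (hin σ k (default : Fin 0 → Fin n)) default default := h2
  rw [realize_hin σ σ' k default default default] at h3
  refine EF_congr k (fun p => ?_) h3
  simp

end Hintikka2

section Glue

/-- The permutation `τ ⊕ (1 ⊖ π)` on `Fin (a + (1 + b))`. -/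
def Gp {a b : ℕ} (σ : Equiv.Perm (Fin a)) (π : Equiv.Perm (Fin b)) :
    Equiv.Perm (Fin (a + (1 + b))) :=
  dsum σ (ssum 1 π)

theorem glue_eq {a b : ℕ} (σ : Equiv.Perm (Fin a)) (π : Equiv.Perm (Fin b)) :
    glue ⟨a, σ⟩ ⟨b, π⟩ = ⟨a + (1 + b), Gp σ π⟩ := rfl

theorem ssum_one_val {b : ℕ} (π : Equiv.Perm (Fin b)) (j : Fin (1 + b)) :
    ((ssum (1 : Equiv.Perm (Fin 1)) π) j).val =
      if h : j.val = 0 then b else (π ⟨j.val - 1, by have := j.isLt; omega⟩).val := by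
  rcases Nat.eq_zero_or_pos j.val with h | h
  · rw [dif_pos h]
    have hj : j = Fin.castAdd b (⟨0, one_pos⟩ : Fin 1) := Fin.ext (by simpa using h)
    conv_lhs => rw [hj]
    rw [ssum]
    simp only [Equiv.trans_apply, finSumFinEquiv_symm_apply_castAdd, Equiv.sumCongr_apply,
      Sum.map_inl, Equiv.Perm.one_apply, Equiv.sumComm_apply, Sum.swap_inl,
      finSumFinEquiv_apply_right, finCongr_apply, Fin.coe_cast, Fin.coe_natAdd]
    omega
  · rw [dif_neg (by omega)]
    have hj : j = Fin.natAdd 1 ⟨j.val - 1, by have := j.isLt; omega⟩ :=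
      Fin.ext (by simp; omega)
    conv_lhs => rw [hj]
    rw [ssum]
    simp only [Equiv.trans_apply, finSumFinEquiv_symm_apply_natAdd, Equiv.sumCongr_apply,
      Sum.map_inr, Equiv.sumComm_apply, Sum.swap_inr, finSumFinEquiv_apply_left,
      finCongr_apply, Fin.coe_cast, Fin.coe_castAdd]

theorem Gp_val {a b : ℕ} (σ : Equiv.Perm (Fin a)) (π : Equiv.Perm (Fin b))
    (p : Fin (a + (1 + b))) :
    ((Gp σ π) p).val =
      if h : p.val < a then (σ ⟨p.val, h⟩).val
      else if h' : p.val = a then a + b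
      else a + (π ⟨p.val - (a + 1), by have := p.isLt; omega⟩).val := by
  rw [Gp, dsum]
  simp only [Equiv.permCongr_apply, Equiv.symm_symm, Equiv.sumCongr_apply]
  rcases Nat.lt_or_ge p.val a with h | h
  · rw [dif_pos h]
    have hp : p = Fin.castAdd (1 + b) ⟨p.val, h⟩ := Fin.ext rfl
    conv_lhs => rw [hp, finSumFinEquiv_symm_apply_castAdd]
    simp only [Sum.map_inl, finSumFinEquiv_apply_left, Fin.coe_castAdd]
  · rw [dif_neg (by omega)]
    have hp : p = Fin.natAdd a ⟨p.val - a, by have := p.isLt; omega⟩ :=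
      Fin.ext (by simp; omega)
    conv_lhs => rw [hp, finSumFinEquiv_symm_apply_natAdd]
    simp only [Sum.map_inr, finSumFinEquiv_apply_right, Fin.coe_natAdd]
    rw [ssum_one_val]
    rcases Nat.eq_or_lt_of_le h with he | hlt
    · rw [dif_pos (by simp; omega), dif_pos (by omega)]
    · rw [dif_neg (by simp; omega), dif_neg (by omega)]
      congr 2

theorem Gp_val_lt {a b : ℕ} (σ : Equiv.Perm (Fin a)) (π : Equiv.Perm (Fin b))
    {p : Fin (a + (1 + b))} (h : p.val < a) :
    ((Gp σ π) p).val = (σ ⟨p.val, h⟩).val := by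
  rw [Gp_val, dif_pos h]

theorem Gp_val_mid {a b : ℕ} (σ : Equiv.Perm (Fin a)) (π : Equiv.Perm (Fin b))
    {p : Fin (a + (1 + b))} (h : p.val = a) :
    ((Gp σ π) p).val = a + b := by
  rw [Gp_val, dif_neg (by omega), dif_pos h]

theorem Gp_val_gt {a b : ℕ} (σ : Equiv.Perm (Fin a)) (π : Equiv.Perm (Fin b))
    {p : Fin (a + (1 + b))} (h : a < p.val) (hb : p.val - (a + 1) < b) :
    ((Gp σ π) p).val = a + (π ⟨p.val - (a + 1), hb⟩).val := by
  rw [Gp_val, dif_neg (by omega), dif_neg (by omega)]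

theorem avoids_Gp {a b : ℕ} {σ : Equiv.Perm (Fin a)} {π : Equiv.Perm (Fin b)}
    (hσ : Avoids σ) (hπ : Avoids π) : Avoids (Gp σ π) := by
  rintro ⟨i, j, k, hij, hjk, h1, h2⟩
  rw [Fin.lt_def] at hij hjk h1 h2
  have hi := i.isLt
  have hj := j.isLt
  have hk := k.isLt
  rcases Nat.lt_or_ge k.val a with hka | hka
  · have hja : j.val < a := by omega
    have hia : i.val < a := by omega
    rw [Gp_val_lt σ π hka, Gp_val_lt σ π hia] at h1
    rw [Gp_val_lt σ π hia, Gp_val_lt σ π hja] at h2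
    exact hσ ⟨⟨i.val, hia⟩, ⟨j.val, hja⟩, ⟨k.val, hka⟩, hij, hjk, h1, h2⟩
  · have hkv : a ≤ ((Gp σ π) k).val := by
      rcases Nat.eq_or_lt_of_le hka with he | hl
      · rw [Gp_val_mid σ π he.symm]; omega
      · rw [Gp_val_gt σ π hl (by omega)]; omega
    rcases Nat.lt_or_ge i.val a with hia | hia
    · rw [Gp_val_lt σ π hia] at h1
      have := (σ ⟨i.val, hia⟩).isLt
      omega
    rcases Nat.eq_or_lt_of_le hia with hie | hia'
    · rw [Gp_val_mid σ π hie.symm] at h2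
      have hja : a < j.val := by omega
      have hbj : j.val - (a + 1) < b := by omega
      rw [Gp_val_gt σ π hja hbj] at h2
      have := (π ⟨j.val - (a + 1), hbj⟩).isLt
      omega
    · have hbi : i.val - (a + 1) < b := by omega
      have hbj : j.val - (a + 1) < b := by omega
      have hbk : k.val - (a + 1) < b := by omega
      have hja : a < j.val := by omega
      have hka' : a < k.val := by omega
      rw [Gp_val_gt σ π hka' hbk, Gp_val_gt σ π hia' hbi] at h1
      rw [Gp_val_gt σ π hia' hbi, Gp_val_gt σ π hja hbj] at h2
      exact hπ ⟨⟨i.val - (a + 1), hbi⟩, ⟨j.val - (a + 1), hbj⟩, ⟨k.val - (a + 1), hbk⟩,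
        by show i.val - (a + 1) < j.val - (a + 1); omega,
        by show j.val - (a + 1) < k.val - (a + 1); omega,
        by show (π ⟨k.val - (a + 1), hbk⟩).val < (π ⟨i.val - (a + 1), hbi⟩).val; omega,
        by show (π ⟨i.val - (a + 1), hbi⟩).val < (π ⟨j.val - (a + 1), hbj⟩).val; omega⟩

end Glue

section Comp

/-- Embedding of the left block. -/
def eL {a b : ℕ} (x : Fin a) : Fin (a + (1 + b)) := ⟨x.val, by have := x.isLt; omega⟩

/-- Embedding of the right block. -/
def eR {a b : ℕ} (x : Fin b) : Fin (a + (1 + b)) := ⟨a + 1 + x.val, by have := x.isLt; omega⟩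

/-- The middle point. -/
def eM {a b : ℕ} : Fin (a + (1 + b)) := ⟨a, by omega⟩

@[simp] theorem eL_val {a b : ℕ} (x : Fin a) : (eL (b := b) x).val = x.val := rfl
@[simp] theorem eR_val {a b : ℕ} (x : Fin b) : (eR (a := a) x).val = a + 1 + x.val := rfl
@[simp] theorem eM_val {a b : ℕ} : (eM : Fin (a + (1 + b))).val = a := rfl

variable {a b a' b' : ℕ} {σ : Equiv.Perm (Fin a)} {σ' : Equiv.Perm (Fin a')}
  {π : Equiv.Perm (Fin b)} {π' : Equiv.Perm (Fin b')}

theorem Gp_eL (x : Fin a) : ((Gp σ π) (eL x)).val = (σ x).val :=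
  Gp_val_lt σ π x.isLt

theorem Gp_eM : ((Gp σ π) eM).val = a + b :=
  Gp_val_mid σ π rfl

theorem Gp_eR (x : Fin b) : ((Gp σ π) (eR x)).val = a + (π x).val := by
  have hb : (eR (a := a) x).val - (a + 1) < b := by
    have := x.isLt; simp only [eR_val]; omega
  rw [Gp_val_gt σ π (by simp only [eR_val]; omega) hb]
  have hx : (⟨(eR (a := a) x).val - (a + 1), hb⟩ : Fin b) = x := by
    apply Fin.ext
    show (eR (a := a) x).val - (a + 1) = x.val
    simp only [eR_val]
    omega
  rw [hx]

/-- The glued list of pairs. -/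
def gl (l₁ : List (Fin a × Fin a')) (l₂ : List (Fin b × Fin b')) :
    List (Fin (a + (1 + b)) × Fin (a' + (1 + b'))) :=
  (eM, eM) :: ((l₁.map fun p => (eL p.1, eL p.2)) ++ l₂.map fun p => (eR p.1, eR p.2))

theorem gl_cons_left (x₀ : Fin a) (y₀ : Fin a') (l₁ : List (Fin a × Fin a'))
    (l₂ : List (Fin b × Fin b')) (p) :
    p ∈ gl ((x₀, y₀) :: l₁) l₂ ↔ p ∈ ((eL x₀, eL y₀) :: gl l₁ l₂) :=
  List.Perm.mem_iff (List.Perm.swap _ _ _)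

theorem gl_cons_right (x₀ : Fin b) (y₀ : Fin b') (l₁ : List (Fin a × Fin a'))
    (l₂ : List (Fin b × Fin b')) (p) :
    p ∈ gl l₁ ((x₀, y₀) :: l₂) ↔ p ∈ ((eR x₀, eR y₀) :: gl l₁ l₂) :=
  List.Perm.mem_iff
    ((List.Perm.cons _ List.perm_middle).trans (List.Perm.swap _ _ _))

theorem gl_mid (l₁ : List (Fin a × Fin a')) (l₂ : List (Fin b × Fin b')) (p) :
    p ∈ gl l₁ l₂ ↔ p ∈ ((eM, eM) :: gl l₁ l₂) := by
  constructor
  · exact List.mem_cons_of_mem _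
  · intro h
    rcases List.mem_cons.mp h with rfl | h
    · exact List.mem_cons_self
    · exact h

theorem piso_glue {l₁ : List (Fin a × Fin a')} {l₂ : List (Fin b × Fin b')}
    (h1 : PIso σ σ' l₁) (h2 : PIso π π' l₂) :
    PIso (Gp σ π) (Gp σ' π') (gl l₁ l₂) := by
  intro p hp q hq
  simp only [gl, List.mem_cons, List.mem_append, List.mem_map] at hp hq
  obtain rfl | ⟨x, hx, rfl⟩ | ⟨x, hx, rfl⟩ := hp <;>
    obtain rfl | ⟨y, hy, rfl⟩ | ⟨y, hy, rfl⟩ := hq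
  -- mid / mid
  · refine ⟨?_, ?_, ?_⟩ <;> simp
  -- mid / left
  · have b1 := y.1.isLt; have b2 := y.2.isLt
    have b3 := (σ y.1).isLt; have b4 := (σ' y.2).isLt
    refine ⟨?_, ?_, ?_⟩ <;>
      simp only [Fin.ext_iff, Fin.lt_def, Gp_eL, Gp_eM, Gp_eR, eL_val, eR_val, eM_val] <;>
      omega
  -- mid / right
  · have b1 := (π y.1).isLt; have b2 := (π' y.2).isLt
    refine ⟨?_, ?_, ?_⟩ <;>
      simp only [Fin.ext_iff, Fin.lt_def, Gp_eL, Gp_eM, Gp_eR, eL_val, eR_val, eM_val] <;>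
      omega
  -- left / mid
  · have b1 := x.1.isLt; have b2 := x.2.isLt
    have b3 := (σ x.1).isLt; have b4 := (σ' x.2).isLt
    refine ⟨?_, ?_, ?_⟩ <;>
      simp only [Fin.ext_iff, Fin.lt_def, Gp_eL, Gp_eM, Gp_eR, eL_val, eR_val, eM_val] <;>
      omega
  -- left / left
  · obtain ⟨e1, e2, e3⟩ := h1 x hx y hy
    rw [Fin.ext_iff, Fin.ext_iff] at e1
    rw [Fin.lt_def, Fin.lt_def] at e2 e3
    refine ⟨?_, ?_, ?_⟩ <;>
      simp only [Fin.ext_iff, Fin.lt_def, Gp_eL, Gp_eM, Gp_eR, eL_val, eR_val, eM_val] <;>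
      omega
  -- left / right
  · have b1 := x.1.isLt; have b2 := x.2.isLt
    have b3 := (σ x.1).isLt; have b4 := (σ' x.2).isLt
    refine ⟨?_, ?_, ?_⟩ <;>
      simp only [Fin.ext_iff, Fin.lt_def, Gp_eL, Gp_eM, Gp_eR, eL_val, eR_val, eM_val] <;>
      omega
  -- right / mid
  · have b1 := (π x.1).isLt; have b2 := (π' x.2).isLt
    refine ⟨?_, ?_, ?_⟩ <;>
      simp only [Fin.ext_iff, Fin.lt_def, Gp_eL, Gp_eM, Gp_eR, eL_val, eR_val, eM_val] <;>
      omega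
  -- right / left
  · have b1 := y.1.isLt; have b2 := y.2.isLt
    have b3 := (σ y.1).isLt; have b4 := (σ' y.2).isLt
    refine ⟨?_, ?_, ?_⟩ <;>
      simp only [Fin.ext_iff, Fin.lt_def, Gp_eL, Gp_eM, Gp_eR, eL_val, eR_val, eM_val] <;>
      omega
  -- right / right
  · obtain ⟨e1, e2, e3⟩ := h2 x hx y hy
    rw [Fin.ext_iff, Fin.ext_iff] at e1
    rw [Fin.lt_def, Fin.lt_def] at e2 e3
    refine ⟨?_, ?_, ?_⟩ <;>
      simp only [Fin.ext_iff, Fin.lt_def, Gp_eL, Gp_eM, Gp_eR, eL_val, eR_val, eM_val] <;>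
      omega

theorem EF_glue : ∀ (k : ℕ) (l₁ : List (Fin a × Fin a')) (l₂ : List (Fin b × Fin b')),
    EF σ σ' k l₁ → EF π π' k l₂ → EF (Gp σ π) (Gp σ' π') k (gl l₁ l₂) := by
  intro k
  induction k with
  | zero => exact fun l₁ l₂ h1 h2 => piso_glue h1 h2
  | succ k ih =>
    intro l₁ l₂ h1 h2
    refine ⟨piso_glue (EF_piso h1) (EF_piso h2), ?_, ?_⟩
    · intro x
      rcases Nat.lt_trichotomy x.val a with hx | hx | hx
      · obtain ⟨y, hy⟩ := h1.2.1 ⟨x.val, hx⟩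
        exact ⟨eL y, EF_congr k (fun p => gl_cons_left ⟨x.val, hx⟩ y l₁ l₂ p)
          (ih _ _ hy (EF_mono k h2))⟩
      · have hxe : x = eM := Fin.ext hx
        subst hxe
        exact ⟨eM, EF_congr k (fun p => gl_mid l₁ l₂ p)
          (ih _ _ (EF_mono k h1) (EF_mono k h2))⟩
      · have hb : x.val - (a + 1) < b := by have := x.isLt; omega
        have hxe : x = eR ⟨x.val - (a + 1), hb⟩ := Fin.ext (by simp; omega)
        obtain ⟨y, hy⟩ := h2.2.1 ⟨x.val - (a + 1), hb⟩
        refine ⟨eR y, ?_⟩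
        rw [hxe]
        exact EF_congr k (fun p => gl_cons_right ⟨x.val - (a + 1), hb⟩ y l₁ l₂ p)
          (ih _ _ (EF_mono k h1) hy)
    · intro x
      rcases Nat.lt_trichotomy x.val a' with hx | hx | hx
      · obtain ⟨y, hy⟩ := h1.2.2 ⟨x.val, hx⟩
        exact ⟨eL y, EF_congr k (fun p => gl_cons_left y ⟨x.val, hx⟩ l₁ l₂ p)
          (ih _ _ hy (EF_mono k h2))⟩
      · have hxe : x = eM := Fin.ext hx
        subst hxe
        exact ⟨eM, EF_congr k (fun p => gl_mid l₁ l₂ p)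
          (ih _ _ (EF_mono k h1) (EF_mono k h2))⟩
      · have hb : x.val - (a' + 1) < b' := by have := x.isLt; omega
        have hxe : x = eR ⟨x.val - (a' + 1), hb⟩ := Fin.ext (by simp; omega)
        obtain ⟨y, hy⟩ := h2.2.2 ⟨x.val - (a' + 1), hb⟩
        refine ⟨eR y, ?_⟩
        rw [hxe]
        exact EF_congr k (fun p => gl_cons_right y ⟨x.val - (a' + 1), hb⟩ l₁ l₂ p)
          (ih _ _ (EF_mono k h1) hy)

end Comp

theorem kEquiv_glue {k : ℕ} {p p' q q' : FinPerm} (h1 : kEquiv k p p') (h2 : kEquiv k q q') :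
    kEquiv k (glue p q) (glue p' q') := by
  obtain ⟨a, σ⟩ := p
  obtain ⟨a', σ'⟩ := p'
  obtain ⟨b, π⟩ := q
  obtain ⟨b', π'⟩ := q'
  intro ψ hψ
  exact EF_sat (EF_glue k [] [] (kEquiv_EF k h1) (kEquiv_EF k h2)) ψ hψ

theorem cnt_ne_zero {k : ℕ} {t : QT k} {n : ℕ} :
    cnt k t n ≠ 0 ↔ ∃ σ : Equiv.Perm (Fin n), Avoids σ ∧ typeOf k ⟨n, σ⟩ = t := by
  rw [cnt, Nat.card_ne_zero]
  constructor
  · rintro ⟨⟨⟨σ, hσ⟩⟩, _⟩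
    exact ⟨σ, hσ⟩
  · rintro ⟨σ, hσ⟩
    exact ⟨⟨⟨σ, hσ⟩⟩, Subtype.finite⟩

theorem typeOf_out {k : ℕ} {t : QT k} {p : FinPerm} (h : typeOf k p = t) :
    kEquiv k p (Quotient.out t) := by
  show (kSetoid k).r p (Quotient.out t)
  exact @Quotient.exact _ (kSetoid k) _ _ (by rw [show Quotient.mk (kSetoid k) p = typeOf k p from rfl, h]; exact (Quotient.out_eq (s := kSetoid k) t).symm)

theorem cnt_step {k : ℕ} {t₁ t₂ t : QT k} (hH : Hfun k t₁ t₂ = t) {n₁ n₂ : ℕ}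
    (h₁ : cnt k t₁ n₁ ≠ 0) (h₂ : cnt k t₂ n₂ ≠ 0) : cnt k t (n₁ + (1 + n₂)) ≠ 0 := by
  obtain ⟨σ, hσa, hσt⟩ := cnt_ne_zero.mp h₁
  obtain ⟨π, hπa, hπt⟩ := cnt_ne_zero.mp h₂
  refine cnt_ne_zero.mpr ⟨Gp σ π, avoids_Gp hσa hπa, ?_⟩
  have he : kEquiv k (glue ⟨n₁, σ⟩ ⟨n₂, π⟩)
      (glue (Quotient.out t₁) (Quotient.out t₂)) :=
    kEquiv_glue (typeOf_out hσt) (typeOf_out hπt)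
  have ht : typeOf k ⟨n₁ + (1 + n₂), Gp σ π⟩ =
      typeOf k (glue (Quotient.out t₁) (Quotient.out t₂)) :=
    @Quotient.sound _ (kSetoid k) _ _ he
  rw [ht]
  exact hH

theorem realized_cnt {k : ℕ} {t : QT k} (h : Realized k t) : ∃ m, cnt k t m ≠ 0 := by
  obtain ⟨p, hpa, hpt⟩ := h
  exact ⟨p.1, cnt_ne_zero.mpr ⟨p.2, hpa, hpt⟩⟩

/-- Aperiodicity propagates along the edges of the dependency graph: if `C_u` is aperiodic
and `u → t` is an edge of `G_k`, then `C_t` is aperiodic. -/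
theorem aperiodicity_propagates (k : ℕ) (hk : 2 ≤ k) (u t : QT k)
    (hu : Realized k u) (ht : Realized k t)
    (hap : ¬ SeqPeriodic fun n : ℕ => (cnt k u n : ℝ)) (he : Edge k u t) :
    ¬ SeqPeriodic fun n : ℕ => (cnt k t n : ℝ) := by
  rintro ⟨d, hd, r, hr⟩
  obtain ⟨d', rfl⟩ : ∃ d', d = d' + 1 := ⟨d - 1, by omega⟩
  obtain ⟨v, hv, hcase⟩ := he
  obtain ⟨m, hm⟩ := realized_cnt hv
  apply hap
  refine ⟨d' + 1, hd, r + (1 + m) * d', ?_⟩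
  intro n hn
  show ((cnt k u n : ℕ) : ℝ) = 0
  by_contra hcn
  have hcn' : cnt k u n ≠ 0 := Nat.cast_ne_zero.mp hcn
  have hstep : cnt k t (n + (1 + m)) ≠ 0 := by
    rcases hcase with hH | hH
    · exact cnt_step hH hcn' hm
    · have h' := cnt_step hH hm hcn'
      have hEq : m + (1 + n) = n + (1 + m) := by omega
      rwa [hEq] at h'
  have hmod : (n + (1 + m)) % (d' + 1) = r % (d' + 1) := by
    by_contra hne
    exact hstep (Nat.cast_eq_zero.mp (hr (n + (1 + m)) hne))
  apply hn
  have h1 : (n + (1 + m) + (1 + m) * d') % (d' + 1) =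
      (r + (1 + m) * d') % (d' + 1) := Nat.ModEq.add_right _ hmod
  have h2 : n + (1 + m) + (1 + m) * d' = n + (1 + m) * (d' + 1) := by ring
  rw [h2, Nat.add_mul_mod_self_right] at h1
  exact h1


end Av231
end

section
/- Let σ_n be a uniform random 231-avoiding permutation of size n, decomposed uniquely as σ_n = τ_n ⊕ (1 ⊖ π_n) with τ_n, π_n ∈ Av(231). Let 𝓕 and 𝓕' be two finite subsets of Av(231), and let E_{𝓕,𝓕'} be the event (τ_n ∈ 𝓕) ∨ (π_n ∈ 𝓕'). Then lim_{n→∞} P(E_{𝓕,𝓕'}) = Σ_{k ≤ K} (|𝓕_k| + |𝓕'_k|) · 4^{-k-1}, where 𝓕_k (resp. 𝓕'_k) is the set of permutations of size k in 𝓕 (resp. 𝓕') and K is the maximal size of a permutation in 𝓕 ∪ 𝓕'. -/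
open FirstOrder Filter Asymptotics Topology

namespace Av231

lemma dsum_castAdd {a b : ℕ} (t : Equiv.Perm (Fin a)) (s : Equiv.Perm (Fin b)) (i : Fin a) :
    dsum t s (Fin.castAdd b i) = Fin.castAdd b (t i) := by
  simp [dsum, Equiv.permCongr_apply]

lemma dsum_natAdd {a b : ℕ} (t : Equiv.Perm (Fin a)) (s : Equiv.Perm (Fin b)) (j : Fin b) :
    dsum t s (Fin.natAdd a j) = Fin.natAdd a (s j) := by
  simp [dsum, Equiv.permCongr_apply]

lemma ssum_castAdd {a b : ℕ} (t : Equiv.Perm (Fin a)) (s : Equiv.Perm (Fin b)) (i : Fin a) :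
    ((ssum t s (Fin.castAdd b i)) : ℕ) = b + (t i : ℕ) := by
  simp [ssum]; omega

lemma ssum_natAdd {a b : ℕ} (t : Equiv.Perm (Fin a)) (s : Equiv.Perm (Fin b)) (j : Fin b) :
    ((ssum t s (Fin.natAdd a j)) : ℕ) = (s j : ℕ) := by
  simp [ssum]

lemma core_val {a b : ℕ} (t : Equiv.Perm (Fin a)) (p : Equiv.Perm (Fin b))
    (x : Fin (a + (1 + b))) :
    ((dsum t (ssum (1 : Equiv.Perm (Fin 1)) p)) x : ℕ) =
      if h : (x : ℕ) < a then (t ⟨x, h⟩ : ℕ)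
      else if h2 : (x : ℕ) = a then a + b
      else a + (p ⟨(x : ℕ) - (a + 1), by omega⟩ : ℕ) := by
  by_cases h : (x : ℕ) < a
  · rw [dif_pos h]
    have hx : x = Fin.castAdd (1 + b) ⟨(x:ℕ), h⟩ := by ext; rfl
    conv_lhs => rw [hx]
    rw [dsum_castAdd]
    rfl
  · rw [dif_neg h]
    by_cases h2 : (x : ℕ) = a
    · rw [dif_pos h2]
      have hx0 : x = Fin.natAdd a (Fin.castAdd b (0 : Fin 1)) := by ext; simp; omega
      conv_lhs => rw [hx0]
      rw [dsum_natAdd]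
      have : ((ssum (1 : Equiv.Perm (Fin 1)) p (Fin.castAdd b (0 : Fin 1))) : ℕ) = b := by
        rw [ssum_castAdd]; simp
      simp [Fin.natAdd, this]
    · rw [dif_neg h2]
      have hx1 : x = Fin.natAdd a (Fin.natAdd 1 (⟨(x:ℕ) - (a+1), by omega⟩ : Fin b)) := by
        ext; simp; omega
      conv_lhs => rw [hx1]
      rw [dsum_natAdd]
      have : ((ssum (1 : Equiv.Perm (Fin 1)) p (Fin.natAdd 1 ⟨(x:ℕ) - (a+1), by omega⟩)) : ℕ)
          = (p ⟨(x:ℕ) - (a+1), by omega⟩ : ℕ) := ssum_natAdd _ _ _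
      show a + _ = a + _
      rw [this]



section core
variable {a b : ℕ} (t : Equiv.Perm (Fin a)) (p : Equiv.Perm (Fin b))

lemma cv1 (x : Fin (a + (1 + b))) (hx : (x : ℕ) < a) :
    ((dsum t (ssum (1 : Equiv.Perm (Fin 1)) p)) x : ℕ) = (t ⟨x, hx⟩ : ℕ) := by
  rw [core_val, dif_pos hx]

lemma cv2 (x : Fin (a + (1 + b))) (hx : (x : ℕ) = a) :
    ((dsum t (ssum (1 : Equiv.Perm (Fin 1)) p)) x : ℕ) = a + b := by
  rw [core_val, dif_neg (by omega), dif_pos hx]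

lemma cv3 (x : Fin (a + (1 + b))) (hx : a < (x : ℕ)) :
    ((dsum t (ssum (1 : Equiv.Perm (Fin 1)) p)) x : ℕ) =
      a + (p ⟨(x : ℕ) - (a + 1), by omega⟩ : ℕ) := by
  rw [core_val, dif_neg (by omega), dif_neg (by omega)]

lemma avoids_core_iff :
    Avoids (dsum t (ssum (1 : Equiv.Perm (Fin 1)) p)) ↔ Avoids t ∧ Avoids p := by
  constructor
  · intro hσ
    constructor
    · rintro ⟨i, j, k, h1, h2, h3, h4⟩
      have hi' : (i : ℕ) < a + (1 + b) := by omega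
      have hj' : (j : ℕ) < a + (1 + b) := by omega
      have hk' : (k : ℕ) < a + (1 + b) := by omega
      refine hσ ⟨⟨i, hi'⟩, ⟨j, hj'⟩, ⟨k, hk'⟩, ?_, ?_, ?_, ?_⟩
      · exact h1
      · exact h2
      · rw [Fin.lt_def, cv1 t p ⟨(k:ℕ), hk'⟩ k.2, cv1 t p ⟨(i:ℕ), hi'⟩ i.2]
        exact h3
      · rw [Fin.lt_def, cv1 t p ⟨(i:ℕ), hi'⟩ i.2, cv1 t p ⟨(j:ℕ), hj'⟩ j.2]
        exact h4
    · rintro ⟨i, j, k, h1, h2, h3, h4⟩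
      have hi' : a + 1 + (i : ℕ) < a + (1 + b) := by omega
      have hj' : a + 1 + (j : ℕ) < a + (1 + b) := by omega
      have hk' : a + 1 + (k : ℕ) < a + (1 + b) := by omega
      have e : ∀ (y : Fin b) (hy : a + 1 + (y:ℕ) < a + (1 + b)) (h2 : _),
          (p ⟨((⟨a + 1 + (y:ℕ), hy⟩ : Fin (a + (1+b))) : ℕ) - (a + 1), h2⟩ : ℕ) = (p y : ℕ) := by
        intro y hy h2
        congr 1
        ext
        simp
      refine hσ ⟨⟨a + 1 + i, hi'⟩, ⟨a + 1 + j, hj'⟩, ⟨a + 1 + k, hk'⟩, ?_, ?_, ?_, ?_⟩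
      · rw [Fin.lt_def] at h1 ⊢; simpa using h1
      · rw [Fin.lt_def] at h2 ⊢; simpa using h2
      · rw [Fin.lt_def, cv3 t p ⟨a+1+(k:ℕ), hk'⟩ (by show a < a+1+(k:ℕ); omega), cv3 t p ⟨a+1+(i:ℕ), hi'⟩ (by show a < a+1+(i:ℕ); omega),
          e k, e i]
        rw [Fin.lt_def] at h3; omega
      · rw [Fin.lt_def, cv3 t p ⟨a+1+(i:ℕ), hi'⟩ (by show a < a+1+(i:ℕ); omega), cv3 t p ⟨a+1+(j:ℕ), hj'⟩ (by show a < a+1+(j:ℕ); omega),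
          e i, e j]
        rw [Fin.lt_def] at h4; omega
  · rintro ⟨ht, hp⟩ ⟨i, j, k, h1, h2, h3, h4⟩
    rw [Fin.lt_def] at h1 h2
    rw [Fin.lt_def] at h3 h4
    have hi := i.2
    have hj := j.2
    have hk := k.2
    rcases lt_trichotomy (k : ℕ) a with hka | hka | hka
    · have vi := cv1 t p i (by omega)
      have vj := cv1 t p j (by omega)
      have vk := cv1 t p k (by omega)
      exact ht ⟨⟨i, by omega⟩, ⟨j, by omega⟩, ⟨k, by omega⟩, by rw [Fin.lt_def]; exact h1,
        by rw [Fin.lt_def]; exact h2, by rw [Fin.lt_def]; omega,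
        by rw [Fin.lt_def]; omega⟩
    · have vk := cv2 t p k hka
      rcases lt_trichotomy (i : ℕ) a with hia | hia | hia
      · have vi := cv1 t p i (by omega)
        have hb : (t ⟨(i:ℕ), by omega⟩ : ℕ) < a := (t _).2
        omega
      · omega
      · have vi := cv3 t p i hia
        have hb : (p ⟨(i:ℕ) - (a+1), by omega⟩ : ℕ) < b := (p _).2
        omega
    · have vk := cv3 t p k hka
      have hpk : (p ⟨(k:ℕ) - (a+1), by omega⟩ : ℕ) < b := (p _).2
      rcases lt_trichotomy (i : ℕ) a with hia | hia | hia
      · have vi := cv1 t p i (by omega)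
        have hb : (t ⟨(i:ℕ), by omega⟩ : ℕ) < a := (t _).2
        omega
      · have vi := cv2 t p i hia
        rcases lt_trichotomy (j : ℕ) a with hja | hja | hja
        · have vj := cv1 t p j (by omega)
          have hb : (t ⟨(j:ℕ), by omega⟩ : ℕ) < a := (t _).2
          omega
        · omega
        · have vj := cv3 t p j hja
          have hb : (p ⟨(j:ℕ) - (a+1), by omega⟩ : ℕ) < b := (p _).2
          omega
      · have hja : a < (j : ℕ) := by omega
        have vi := cv3 t p i hia
        have vj := cv3 t p j hja
        refine hp ⟨⟨(i:ℕ) - (a+1), by omega⟩, ⟨(j:ℕ) - (a+1), by omega⟩,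
          ⟨(k:ℕ) - (a+1), by omega⟩, by rw [Fin.lt_def]; simp; omega,
          by rw [Fin.lt_def]; simp; omega, by rw [Fin.lt_def]; omega,
          by rw [Fin.lt_def]; omega⟩

lemma core_lt_max (x : Fin (a + (1 + b))) (hx : (x : ℕ) ≠ a) :
    ((dsum t (ssum (1 : Equiv.Perm (Fin 1)) p)) x : ℕ) < a + b := by
  rcases lt_trichotomy (x : ℕ) a with h | h | h
  · have := cv1 t p x h
    have hb : (t ⟨(x:ℕ), h⟩ : ℕ) < a := (t _).2
    omega
  · exact absurd h hx
  · have := cv3 t p x h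
    have hb : (p ⟨(x:ℕ) - (a+1), by omega⟩ : ℕ) < b := (p _).2
    omega

end core

lemma heq_perm_val {m n : ℕ} (h : m = n) {σ : Equiv.Perm (Fin m)} {σ' : Equiv.Perm (Fin n)}
    (hh : HEq σ σ') (x : Fin m) : (σ x : ℕ) = (σ' (Fin.cast h x) : ℕ) := by
  subst h
  rw [eq_of_heq hh]
  rfl

lemma sigma_perm_ext {m n : ℕ} (h : m = n) (σ : Equiv.Perm (Fin m)) (σ' : Equiv.Perm (Fin n))
    (hv : ∀ x : Fin m, (σ x : ℕ) = (σ' (Fin.cast h x) : ℕ)) :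
    (⟨m, σ⟩ : FinPerm) = ⟨n, σ'⟩ := by
  subst h
  have : σ = σ' := Equiv.ext fun x => Fin.ext (by simpa using hv x)
  rw [this]

set_option maxHeartbeats 1000000 in
lemma glue_injective : ∀ τ π τ' π' : FinPerm, glue τ π = glue τ' π' → τ = τ' ∧ π = π' := by
  rintro ⟨a, t⟩ ⟨b, p⟩ ⟨a', t'⟩ ⟨b', p'⟩ h
  rw [glue, glue] at h
  have hn : a + (1 + b) = a' + (1 + b') := congrArg Sigma.fst h
  have hh : HEq (dsum t (ssum (1 : Equiv.Perm (Fin 1)) p))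
      (dsum t' (ssum (1 : Equiv.Perm (Fin 1)) p')) := (Sigma.mk.inj_iff.mp h).2
  have key : ∀ (x : ℕ) (hx1 : x < a + (1 + b)) (hx2 : x < a' + (1 + b')),
      ((dsum t (ssum (1 : Equiv.Perm (Fin 1)) p)) ⟨x, hx1⟩ : ℕ) =
      ((dsum t' (ssum (1 : Equiv.Perm (Fin 1)) p')) ⟨x, hx2⟩ : ℕ) := by
    intro x hx1 hx2
    have := heq_perm_val hn hh ⟨x, hx1⟩
    rwa [show Fin.cast hn ⟨x, hx1⟩ = ⟨x, hx2⟩ from rfl] at this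
  have haa' : a = a' := by
    by_contra hne
    have h1 := cv2 t p ⟨a, by omega⟩ rfl
    have h3 := key a (by omega) (by omega)
    rcases lt_or_gt_of_ne hne with hlt | hgt
    · have h2 := cv1 t' p' ⟨a, by omega⟩ hlt
      have hb : (t' ⟨a, hlt⟩ : ℕ) < a' := (t' _).2
      omega
    · have h2 := core_lt_max t' p' ⟨a, by omega⟩ (by show a ≠ a'; omega)
      omega
  subst haa'
  have hbb' : b = b' := by omega
  subst hbb'
  have heq2 : dsum t (ssum (1 : Equiv.Perm (Fin 1)) p)
      = dsum t' (ssum (1 : Equiv.Perm (Fin 1)) p') := eq_of_heq hh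
  have h4 : Equiv.sumCongr t (ssum (1 : Equiv.Perm (Fin 1)) p)
      = Equiv.sumCongr t' (ssum (1 : Equiv.Perm (Fin 1)) p') :=
    (finSumFinEquiv.permCongr).injective heq2
  have ht : t = t' := by
    refine Equiv.ext fun i => ?_
    have := DFunLike.congr_fun h4 (Sum.inl i)
    simpa using this
  have hp : p = p' := by
    refine Equiv.ext fun y => Fin.ext ?_
    have hs := DFunLike.congr_fun h4 (Sum.inr (Fin.natAdd 1 y))
    simp only [Equiv.sumCongr_apply, Sum.map_inr] at hs
    have v1 := ssum_natAdd (1 : Equiv.Perm (Fin 1)) p y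
    have v2 := ssum_natAdd (1 : Equiv.Perm (Fin 1)) p' y
    rw [← v1, ← v2]
    exact congrArg Fin.val (Sum.inr.inj hs)
  rw [ht, hp]
  exact ⟨rfl, rfl⟩

lemma exists_decomp {m : ℕ} (σ : Equiv.Perm (Fin (m + 1))) (hσ : Avoids σ) :
    ∃ τ π : FinPerm, (⟨m + 1, σ⟩ : FinPerm) = glue τ π := by
  classical
  set A : Fin (m + 1) := σ.symm (Fin.last m) with hAdef
  have hσA : σ A = Fin.last m := σ.apply_symm_apply _
  have hAle : (A : ℕ) ≤ m := Fin.is_le A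
  have hvalA : (σ A : ℕ) = m := by rw [hσA]; rfl
  have hne_lastval : ∀ x : Fin (m + 1), x ≠ A → (σ x : ℕ) < m := by
    intro x hx
    have h1 : (σ x : ℕ) ≤ m := Fin.is_le _
    have h2 : (σ x : ℕ) ≠ m := by
      intro h
      exact hx (σ.injective (Fin.ext (by rw [h, hvalA])))
    omega
  have key1 : ∀ i k : Fin (m + 1), i < A → A < k → (σ i : ℕ) < (σ k : ℕ) := by
    intro i k hi hk
    by_contra hle
    push_neg at hle
    have hik : (σ k : ℕ) ≠ (σ i : ℕ) := by
      intro h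
      have := σ.injective (Fin.ext h)
      rw [Fin.lt_def] at hi hk
      omega
    have hilast : (σ i : ℕ) < m := hne_lastval i (Fin.ne_of_lt hi)
    exact hσ ⟨i, A, k, hi, hk, by rw [Fin.lt_def]; omega, by rw [Fin.lt_def]; omega⟩
  have key2 : ∀ i : Fin (m + 1), i < A → (σ i : ℕ) < (A : ℕ) := by
    intro i hi
    have himg : (Finset.Ici A).image σ ⊆ Finset.Ioi (σ i) := by
      intro v hv
      obtain ⟨k, hk, rfl⟩ := Finset.mem_image.mp hv
      rw [Finset.mem_Ici] at hk
      rw [Finset.mem_Ioi]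
      rcases eq_or_lt_of_le hk with h | h
      · rw [← h]
        rw [Fin.lt_def]
        have := hne_lastval i (Fin.ne_of_lt hi)
        omega
      · rw [Fin.lt_def]
        exact key1 i k hi h
    have hcard : (Finset.Ici A).card ≤ (Finset.Ioi (σ i)).card := by
      calc (Finset.Ici A).card = ((Finset.Ici A).image σ).card :=
            (Finset.card_image_of_injective _ σ.injective).symm
        _ ≤ _ := Finset.card_le_card himg
    rw [Fin.card_Ici, Fin.card_Ioi] at hcard
    rw [Fin.lt_def] at hi
    have := Fin.is_le (σ i)
    omega
  have key3 : ∀ k : Fin (m + 1), A < k → (A : ℕ) ≤ (σ k : ℕ) := by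
    intro k hk
    by_contra hlt
    push_neg at hlt
    have himg2 : (Finset.Iio A).image σ ⊆ Finset.Iio A := by
      intro v hv
      obtain ⟨i, hi, rfl⟩ := Finset.mem_image.mp hv
      rw [Finset.mem_Iio] at hi ⊢
      rw [Fin.lt_def]
      exact key2 i hi
    have heq : (Finset.Iio A).image σ = Finset.Iio A := by
      apply Finset.eq_of_subset_of_card_le himg2
      rw [Finset.card_image_of_injective _ σ.injective]
    have : σ k ∈ (Finset.Iio A).image σ := by
      rw [heq, Finset.mem_Iio, Fin.lt_def]
      exact hlt
    obtain ⟨i, hi, he⟩ := Finset.mem_image.mp this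
    rw [Finset.mem_Iio] at hi
    have := σ.injective he
    subst this
    exact absurd hk (by rw [Fin.lt_def] at hi ⊢; omega)
  -- construct the two component permutations
  have hf : Function.Injective (fun i : Fin (A : ℕ) =>
      (⟨(σ ⟨(i : ℕ), by omega⟩ : ℕ), key2 ⟨(i : ℕ), by omega⟩ (by rw [Fin.lt_def]; exact i.2)⟩
        : Fin (A : ℕ))) := by
    intro x y h
    simp only [Fin.mk.injEq] at h
    have := σ.injective (Fin.ext h)
    exact Fin.ext (by simpa using congrArg Fin.val this)
  let t : Equiv.Perm (Fin (A : ℕ)) := Equiv.ofBijective _ ((Finite.injective_iff_bijective).mp hf)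
  have hgbd : ∀ y : Fin (m - (A : ℕ)), (σ ⟨(A : ℕ) + 1 + (y : ℕ), by omega⟩ : ℕ) - (A : ℕ) < m - (A : ℕ) := by
    intro y
    have h1 := key3 ⟨(A : ℕ) + 1 + (y : ℕ), by omega⟩ (by rw [Fin.lt_def]; simp; omega)
    have h2 := hne_lastval ⟨(A : ℕ) + 1 + (y : ℕ), by omega⟩
      (by intro h; have := congrArg Fin.val h; simp at this; omega)
    omega
  have hg : Function.Injective (fun y : Fin (m - (A : ℕ)) =>
      (⟨(σ ⟨(A : ℕ) + 1 + (y : ℕ), by omega⟩ : ℕ) - (A : ℕ), hgbd y⟩ : Fin (m - (A : ℕ)))) := by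
    intro x y h
    have h1 := key3 ⟨(A : ℕ) + 1 + (x : ℕ), by omega⟩ (by rw [Fin.lt_def]; simp; omega)
    have h2 := key3 ⟨(A : ℕ) + 1 + (y : ℕ), by omega⟩ (by rw [Fin.lt_def]; simp; omega)
    simp only [Fin.mk.injEq] at h
    have h3 : (σ ⟨(A : ℕ) + 1 + (x : ℕ), by omega⟩ : ℕ) = (σ ⟨(A : ℕ) + 1 + (y : ℕ), by omega⟩ : ℕ) := by
      omega
    have := σ.injective (Fin.ext h3)
    have := congrArg Fin.val this
    simp at this
    exact Fin.ext (by omega)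
  let p : Equiv.Perm (Fin (m - (A : ℕ))) :=
    Equiv.ofBijective _ ((Finite.injective_iff_bijective).mp hg)
  refine ⟨⟨(A : ℕ), t⟩, ⟨m - (A : ℕ), p⟩, ?_⟩
  have hsz : m + 1 = (A : ℕ) + (1 + (m - (A : ℕ))) := by omega
  refine sigma_perm_ext hsz σ _ ?_
  intro x
  have hx := x.2
  rcases lt_trichotomy (x : ℕ) (A : ℕ) with h | h | h
  · rw [cv1 t p (Fin.cast hsz x) (by simpa using h)]
    show (σ x : ℕ) = (σ ⟨((Fin.cast hsz x : Fin _) : ℕ), by omega⟩ : ℕ)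
    congr 1
  · rw [cv2 t p (Fin.cast hsz x) (by simpa using h)]
    have : x = A := Fin.ext h
    rw [this, hvalA]
    omega
  · rw [cv3 t p (Fin.cast hsz x) (by simpa using h)]
    have h1 := key3 x (by rw [Fin.lt_def]; omega)
    show (σ x : ℕ) = (A : ℕ) + ((σ ⟨(A : ℕ) + 1 + (((Fin.cast hsz x : Fin _) : ℕ) - ((A : ℕ) + 1)), by omega⟩ : ℕ) - (A : ℕ))
    have he : (⟨(A : ℕ) + 1 + (((Fin.cast hsz x : Fin _) : ℕ) - ((A : ℕ) + 1)), by omega⟩ : Fin (m + 1)) = x := by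
      ext
      simp
      omega
    rw [he]
    omega



noncomputable def Acount (n : ℕ) : ℕ := Nat.card {σ : Equiv.Perm (Fin n) // Avoids σ}

lemma mycard_sigma {ι : Type*} [Fintype ι] (f : ι → Type*) [∀ i, Finite (f i)] :
    Nat.card (Σ i, f i) = ∑ i, Nat.card (f i) := by
  have := fun i => Fintype.ofFinite (f i)
  simp only [Nat.card_eq_fintype_card]
  exact Fintype.card_sigma

lemma card_subtype_finperm (n : ℕ) (P : FinPerm → Prop) :
    Nat.card {p : FinPerm // P p ∧ p.1 = n} = Nat.card {σ : Equiv.Perm (Fin n) // P ⟨n, σ⟩} := by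
  refine (Nat.card_eq_of_bijective (fun σ => ⟨⟨n, σ.1⟩, σ.2, rfl⟩) ⟨?_, ?_⟩).symm
  · intro x y h
    have h2 := (Subtype.ext_iff.mp h)
    have h3 := eq_of_heq (Sigma.mk.inj_iff.mp h2).2
    exact Subtype.ext h3
  · rintro ⟨⟨k, σ⟩, hP, hk⟩
    dsimp at hk
    subst hk
    exact ⟨⟨σ, hP⟩, rfl⟩

lemma finite_subtype_finperm (n : ℕ) (P : FinPerm → Prop) :
    Finite {p : FinPerm // P p ∧ p.1 = n} := by
  refine Finite.of_surjective (fun σ : {σ : Equiv.Perm (Fin n) // P ⟨n, σ⟩} =>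
    (⟨⟨n, σ.1⟩, σ.2, rfl⟩ : {p : FinPerm // P p ∧ p.1 = n})) ?_
  rintro ⟨⟨k, σ⟩, hP, hk⟩
  dsimp at hk
  subst hk
  exact ⟨⟨σ, hP⟩, rfl⟩

lemma avoidsF_glue_iff (τ π : FinPerm) : AvoidsF (glue τ π) ↔ AvoidsF τ ∧ AvoidsF π :=
  avoids_core_iff τ.2 π.2

lemma Acount_succ (n : ℕ) :
    Acount (n + 1) = ∑ k : Fin (n + 1), Acount k * Acount (n - k) := by
  have hb : Function.Bijective
      (fun s : Σ k : Fin (n + 1), {σ : Equiv.Perm (Fin (k : ℕ)) // Avoids σ} ×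
          {σ : Equiv.Perm (Fin (n - (k : ℕ))) // Avoids σ} =>
        (⟨glue ⟨(s.1 : ℕ), s.2.1.1⟩ ⟨n - (s.1 : ℕ), s.2.2.1⟩,
          (avoids_core_iff s.2.1.1 s.2.2.1).mpr ⟨s.2.1.2, s.2.2.2⟩,
          by show (s.1 : ℕ) + (1 + (n - (s.1 : ℕ))) = n + 1; have := s.1.2; omega⟩ :
          {p : FinPerm // AvoidsF p ∧ p.1 = n + 1})) := by
    constructor
    · rintro ⟨k1, ⟨t1, ht1⟩, ⟨p1, hp1⟩⟩ ⟨k2, ⟨t2, ht2⟩, ⟨p2, hp2⟩⟩ h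
      have h2 := Subtype.ext_iff.mp h
      dsimp at h2
      obtain ⟨e1, e2⟩ := glue_injective _ _ _ _ h2
      have hk : (k1 : ℕ) = (k2 : ℕ) := congrArg Sigma.fst e1
      have hkk : k1 = k2 := Fin.ext hk
      subst hkk
      have ht : t1 = t2 := eq_of_heq (Sigma.mk.inj_iff.mp e1).2
      have hp : p1 = p2 := eq_of_heq (Sigma.mk.inj_iff.mp e2).2
      subst ht
      subst hp
      rfl
    · rintro ⟨⟨k, σ⟩, hav, hk⟩
      dsimp at hk
      subst hk
      obtain ⟨⟨a, t⟩, ⟨b, p⟩, heq⟩ := exists_decomp σ hav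
      have hsz : a + (1 + b) = n + 1 := (congrArg Sigma.fst heq).symm
      have hb2 : b = n - a := by omega
      subst hb2
      have hgav : AvoidsF (glue ⟨a, t⟩ ⟨n - a, p⟩) := by
        rw [← heq]; exact hav
      obtain ⟨hta, hpa⟩ := (avoidsF_glue_iff _ _).mp hgav
      refine ⟨⟨⟨a, by omega⟩, ⟨t, hta⟩, ⟨p, hpa⟩⟩, ?_⟩
      exact Subtype.ext heq.symm
  have hcard := Nat.card_eq_of_bijective _ hb
  have hfin : ∀ k : Fin (n + 1), Finite ({σ : Equiv.Perm (Fin (k : ℕ)) // Avoids σ} ×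
      {σ : Equiv.Perm (Fin (n - (k : ℕ))) // Avoids σ}) := fun k => inferInstance
  rw [mycard_sigma] at hcard
  have : Acount (n + 1) = Nat.card {p : FinPerm // AvoidsF p ∧ p.1 = n + 1} := by
    rw [card_subtype_finperm]
    rfl
  rw [this, ← hcard]
  congr 1
  ext k
  rw [Nat.card_prod]
  rfl

lemma Acount_eq_catalan : ∀ n, Acount n = catalan n := by
  intro n
  induction n using Nat.strong_induction_on with
  | _ n ih =>
    match n with
    | 0 =>
      have hall : ∀ σ : Equiv.Perm (Fin 0), Avoids σ := by
        rintro σ ⟨i, _⟩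
        exact i.elim0
      rw [catalan_zero, Acount, Nat.card_congr (Equiv.subtypeUnivEquiv hall)]
      simp [Nat.card_eq_fintype_card]
    | (m + 1) =>
      rw [Acount_succ, catalan_succ]
      refine Finset.sum_congr rfl fun k _ => ?_
      rw [ih k (by omega), ih (m - (k : ℕ)) (by omega)]


lemma sum_over_finset (F : Finset FinPerm) (K : ℕ) (hK : ∀ ρ ∈ F, ρ.1 ≤ K) (f : ℕ → ℕ) :
    ∑ ρ ∈ F, f ρ.1 = ∑ k ∈ Finset.range (K + 1), (F.filter (fun ρ => ρ.1 = k)).card * f k := by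
  classical
  have h := Finset.sum_fiberwise_of_maps_to (g := fun ρ : FinPerm => ρ.1)
      (t := Finset.range (K + 1))
      (fun ρ hρ => Finset.mem_range.mpr (Nat.lt_succ_of_le (hK ρ hρ))) (fun ρ => f ρ.1)
  rw [← h]
  refine Finset.sum_congr rfl fun k _ => ?_
  have hcon : ∀ ρ ∈ F.filter (fun ρ => ρ.1 = k), f ρ.1 = f k := fun ρ hρ => by
    rw [(Finset.mem_filter.mp hρ).2]
  rw [Finset.sum_congr rfl hcon, Finset.sum_const, smul_eq_mul]

lemma event_count (F F' : Finset FinPerm)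
    (hF : ∀ ρ ∈ F, AvoidsF ρ) (hF' : ∀ ρ ∈ F', AvoidsF ρ)
    (K : ℕ) (hK : ∀ ρ ∈ F, ρ.1 ≤ K) (hK' : ∀ ρ ∈ F', ρ.1 ≤ K)
    (n : ℕ) (hn : 2 * K + 2 ≤ n) :
    Nat.card {σ : Equiv.Perm (Fin n) // Avoids σ ∧ ∃ τ π : FinPerm,
        (⟨n, σ⟩ : FinPerm) = glue τ π ∧ (τ ∈ F ∨ π ∈ F')}
      = ∑ k ∈ Finset.range (K + 1),
          ((F.filter (fun ρ => ρ.1 = k)).card + (F'.filter (fun ρ => ρ.1 = k)).card)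
            * catalan (n - 1 - k) := by
  classical
  set P : FinPerm → Prop := fun p => AvoidsF p ∧ ∃ τ π : FinPerm,
      p = glue τ π ∧ (τ ∈ F ∨ π ∈ F') with hP
  -- step 1: transfer to FinPerm subtype
  have step1 : Nat.card {σ : Equiv.Perm (Fin n) // Avoids σ ∧ ∃ τ π : FinPerm,
      (⟨n, σ⟩ : FinPerm) = glue τ π ∧ (τ ∈ F ∨ π ∈ F')}
      = Nat.card {p : FinPerm // P p ∧ p.1 = n} := by
    rw [card_subtype_finperm n P]
    rfl
  rw [step1]
  -- step 2: bijection with the disjoint union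
  have hb : Function.Bijective
      (fun s : (Σ ρ : {ρ : FinPerm // ρ ∈ F}, {σ : Equiv.Perm (Fin (n - 1 - ρ.1.1)) // Avoids σ}) ⊕
          (Σ ρ : {ρ : FinPerm // ρ ∈ F'}, {σ : Equiv.Perm (Fin (n - 1 - ρ.1.1)) // Avoids σ}) =>
        (match s with
          | Sum.inl ⟨ρ, q⟩ => (⟨glue ρ.1 ⟨n - 1 - ρ.1.1, q.1⟩,
              ⟨⟨(avoidsF_glue_iff _ _).mpr ⟨hF ρ.1 ρ.2, q.2⟩,
                ρ.1, ⟨n - 1 - ρ.1.1, q.1⟩, rfl, Or.inl ρ.2⟩, by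
                show ρ.1.1 + (1 + (n - 1 - ρ.1.1)) = n
                have := hK ρ.1 ρ.2; omega⟩⟩ : {p : FinPerm // P p ∧ p.1 = n})
          | Sum.inr ⟨ρ, q⟩ => ⟨glue ⟨n - 1 - ρ.1.1, q.1⟩ ρ.1,
              ⟨⟨(avoidsF_glue_iff _ _).mpr ⟨q.2, hF' ρ.1 ρ.2⟩,
                ⟨n - 1 - ρ.1.1, q.1⟩, ρ.1, rfl, Or.inr ρ.2⟩, by
                show (n - 1 - ρ.1.1) + (1 + ρ.1.1) = n
                have := hK' ρ.1 ρ.2; omega⟩⟩)) := by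
    constructor
    · rintro (⟨ρ1, q1⟩ | ⟨ρ1, q1⟩) (⟨ρ2, q2⟩ | ⟨ρ2, q2⟩) h <;>
        simp only [Subtype.mk.injEq] at h
      · obtain ⟨e1, e2⟩ := glue_injective _ _ _ _ h
        have hρ : ρ1 = ρ2 := Subtype.ext e1
        subst hρ
        have hq : q1 = q2 := Subtype.ext (eq_of_heq (Sigma.mk.inj_iff.mp e2).2)
        rw [hq]
      · obtain ⟨e1, e2⟩ := glue_injective _ _ _ _ h
        have h1 : ρ1.1.1 = n - 1 - ρ2.1.1 := congrArg Sigma.fst e1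
        have := hK ρ1.1 ρ1.2
        have := hK' ρ2.1 ρ2.2
        omega
      · obtain ⟨e1, e2⟩ := glue_injective _ _ _ _ h
        have h1 : n - 1 - ρ1.1.1 = ρ2.1.1 := congrArg Sigma.fst e1
        have := hK' ρ1.1 ρ1.2
        have := hK ρ2.1 ρ2.2
        omega
      · obtain ⟨e1, e2⟩ := glue_injective _ _ _ _ h
        have hρ : ρ1 = ρ2 := Subtype.ext e2
        subst hρ
        have hq : q1 = q2 := Subtype.ext (eq_of_heq (Sigma.mk.inj_iff.mp e1).2)
        rw [hq]
    · rintro ⟨p, ⟨hav, τ, π, heq, hor⟩, hsz⟩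
      rcases hor with hτ | hπ
      · obtain ⟨b, pp⟩ := π
        have hs2 : τ.1 + (1 + b) = n := by rw [heq] at hsz; exact hsz
        have hb2 : b = n - 1 - τ.1 := by have := hK τ hτ; omega
        subst hb2
        have hgav : AvoidsF (glue τ ⟨n - 1 - τ.1, pp⟩) := by rw [← heq]; exact hav
        obtain ⟨hta, hpa⟩ := (avoidsF_glue_iff _ _).mp hgav
        exact ⟨Sum.inl ⟨⟨τ, hτ⟩, ⟨pp, hpa⟩⟩, Subtype.ext heq.symm⟩
      · obtain ⟨a, tt⟩ := τ
        have hs2 : a + (1 + π.1) = n := by rw [heq] at hsz; exact hsz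
        have ha2 : a = n - 1 - π.1 := by have := hK' π hπ; omega
        subst ha2
        have hgav : AvoidsF (glue ⟨n - 1 - π.1, tt⟩ π) := by rw [← heq]; exact hav
        obtain ⟨hta, hpa⟩ := (avoidsF_glue_iff _ _).mp hgav
        exact ⟨Sum.inr ⟨⟨π, hπ⟩, ⟨tt, hta⟩⟩, Subtype.ext heq.symm⟩
  have hcard := (Nat.card_eq_of_bijective _ hb).symm
  rw [hcard, Nat.card_sum, mycard_sigma, mycard_sigma]
  have hleft : ∀ ρ : {ρ : FinPerm // ρ ∈ F},
      Nat.card {σ : Equiv.Perm (Fin (n - 1 - ρ.1.1)) // Avoids σ} = catalan (n - 1 - ρ.1.1) :=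
    fun ρ => by rw [← Acount_eq_catalan]; rfl
  have hright : ∀ ρ : {ρ : FinPerm // ρ ∈ F'},
      Nat.card {σ : Equiv.Perm (Fin (n - 1 - ρ.1.1)) // Avoids σ} = catalan (n - 1 - ρ.1.1) :=
    fun ρ => by rw [← Acount_eq_catalan]; rfl
  calc (∑ ρ : {ρ : FinPerm // ρ ∈ F}, Nat.card {σ : Equiv.Perm (Fin (n - 1 - ρ.1.1)) // Avoids σ})
        + (∑ ρ : {ρ : FinPerm // ρ ∈ F'}, Nat.card {σ : Equiv.Perm (Fin (n - 1 - ρ.1.1)) // Avoids σ})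
      = (∑ ρ ∈ F, catalan (n - 1 - ρ.1)) + (∑ ρ ∈ F', catalan (n - 1 - ρ.1)) := by
        congr 1
        · rw [Finset.sum_congr rfl fun ρ _ => hleft ρ]
          exact Finset.sum_coe_sort F (fun ρ => catalan (n - 1 - ρ.1))
        · rw [Finset.sum_congr rfl fun ρ _ => hright ρ]
          exact Finset.sum_coe_sort F' (fun ρ => catalan (n - 1 - ρ.1))
    _ = (∑ k ∈ Finset.range (K + 1), (F.filter (fun ρ => ρ.1 = k)).card * catalan (n - 1 - k))
        + (∑ k ∈ Finset.range (K + 1), (F'.filter (fun ρ => ρ.1 = k)).card * catalan (n - 1 - k)) := by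
        rw [sum_over_finset F K hK (fun k => catalan (n - 1 - k)),
          sum_over_finset F' K hK' (fun k => catalan (n - 1 - k))]
    _ = _ := by
        rw [← Finset.sum_add_distrib]
        refine Finset.sum_congr rfl fun k _ => ?_
        ring


lemma catalan_pos' (n : ℕ) : 0 < catalan n := by
  have h1 := succ_mul_catalan_eq_centralBinom n
  have h2 := Nat.centralBinom_pos n
  rcases Nat.eq_zero_or_pos (catalan n) with h | h
  · rw [h, Nat.mul_zero] at h1; omega
  · exact h

lemma catalan_rec (n : ℕ) : (n + 2) * catalan (n + 1) = 2 * (2 * n + 1) * catalan n := by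
  have h1 := succ_mul_catalan_eq_centralBinom (n + 1)
  have h2 := Nat.succ_mul_centralBinom_succ n
  have h3 := succ_mul_catalan_eq_centralBinom n
  have key : (n + 1) * ((n + 2) * catalan (n + 1)) = (n + 1) * (2 * (2 * n + 1) * catalan n) := by
    calc (n + 1) * ((n + 2) * catalan (n + 1)) = (n + 1) * Nat.centralBinom (n + 1) := by rw [h1]
      _ = 2 * (2 * n + 1) * Nat.centralBinom n := h2
      _ = 2 * (2 * n + 1) * ((n + 1) * catalan n) := by rw [h3]
      _ = (n + 1) * (2 * (2 * n + 1) * catalan n) := by ring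
  exact Nat.eq_of_mul_eq_mul_left (by omega) key

lemma catalan_ratio_tendsto :
    Tendsto (fun n : ℕ => (catalan n : ℝ) / (catalan (n + 1) : ℝ)) atTop (𝓝 (1 / 4)) := by
  have heq : ∀ n : ℕ, 1 ≤ n → (catalan n : ℝ) / (catalan (n + 1) : ℝ)
      = (1 + 2 * ((n : ℝ))⁻¹) / (4 + 2 * ((n : ℝ))⁻¹) := by
    intro n hn
    have hrec := catalan_rec n
    have hrecR : ((n : ℝ) + 2) * (catalan (n + 1) : ℝ) = 2 * (2 * (n : ℝ) + 1) * (catalan n : ℝ) := by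
      exact_mod_cast congrArg (fun x : ℕ => (x : ℝ)) hrec
    have hc1 : (0 : ℝ) < (catalan (n + 1) : ℝ) := by exact_mod_cast catalan_pos' (n + 1)
    have hn0 : (0 : ℝ) < (n : ℝ) := by exact_mod_cast hn
    rw [div_eq_div_iff hc1.ne' (by positivity : (0:ℝ) < 4 + 2 * ((n : ℝ))⁻¹).ne']
    have hni : (n : ℝ) * ((n : ℝ))⁻¹ = 1 := mul_inv_cancel₀ (ne_of_gt hn0)
    field_simp
    nlinarith [hrecR]
  have hlim : Tendsto (fun n : ℕ => (1 + 2 * ((n : ℝ))⁻¹) / (4 + 2 * ((n : ℝ))⁻¹)) atTop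
      (𝓝 ((1 + 2 * 0) / (4 + 2 * 0))) := by
    apply Tendsto.div
    · exact tendsto_const_nhds.add (tendsto_inv_atTop_nhds_zero_nat.const_mul 2)
    · exact tendsto_const_nhds.add (tendsto_inv_atTop_nhds_zero_nat.const_mul 2)
    · norm_num
  have hlim2 : Tendsto (fun n : ℕ => (1 + 2 * ((n : ℝ))⁻¹) / (4 + 2 * ((n : ℝ))⁻¹)) atTop
      (𝓝 (1 / 4)) := by
    convert hlim using 2 <;> norm_num
  refine Tendsto.congr' ?_ hlim2
  filter_upwards [eventually_ge_atTop 1] with n hn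
  exact (heq n hn).symm

lemma catalan_ratio_pow (m : ℕ) :
    Tendsto (fun n : ℕ => (catalan n : ℝ) / (catalan (n + m) : ℝ)) atTop (𝓝 ((1 / 4) ^ m)) := by
  induction m with
  | zero =>
    refine Tendsto.congr (fun n => ?_) tendsto_const_nhds
    rw [pow_zero]
    rw [Nat.add_zero, div_self (by exact_mod_cast (catalan_pos' n).ne')]
  | succ m ih =>
    have hstep : Tendsto (fun n : ℕ => (catalan (n + m) : ℝ) / (catalan (n + m + 1) : ℝ)) atTop
        (𝓝 (1 / 4)) :=
      catalan_ratio_tendsto.comp (tendsto_add_atTop_nat m)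
    have hmul := ih.mul hstep
    rw [pow_succ]
    refine Tendsto.congr (fun n => ?_) hmul
    have hb : (catalan (n + m) : ℝ) ≠ 0 := by exact_mod_cast (catalan_pos' (n + m)).ne'
    rw [div_mul_div_comm, mul_comm (catalan n : ℝ) (catalan (n + m) : ℝ),
      mul_div_mul_left _ _ hb]
    rfl

lemma catalan_ratio_shift (k : ℕ) :
    Tendsto (fun n : ℕ => (catalan (n - 1 - k) : ℝ) / (catalan n : ℝ)) atTop
      (𝓝 ((1 / 4) ^ (k + 1))) := by
  have hcomp := (catalan_ratio_pow (k + 1)).comp (tendsto_sub_atTop_nat (k + 1))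
  refine Tendsto.congr' ?_ hcomp
  filter_upwards [eventually_ge_atTop (k + 1)] with n hn
  show (catalan (n - (k + 1)) : ℝ) / (catalan (n - (k + 1) + (k + 1)) : ℝ) = _
  rw [Nat.sub_add_cancel hn, show n - (k + 1) = n - 1 - k by omega]



/-- Decompose a uniform random 231-avoiding permutation of size `n` as `σ = τ ⊕ (1 ⊖ π)`.
For finite sets `𝓕, 𝓕'` of 231-avoiding permutations, all of size at most `K`, the
probability of the event `(τ ∈ 𝓕) ∨ (π ∈ 𝓕')` converges to
`Σ_{k ≤ K} (|𝓕_k| + |𝓕'_k|) 4^{-k-1}`, where `𝓕_k` is the set of elements of `𝓕` of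
size `k`. -/
theorem event_probability_limit (F F' : Finset FinPerm)
    (hF : ∀ ρ ∈ F, AvoidsF ρ) (hF' : ∀ ρ ∈ F', AvoidsF ρ)
    (K : ℕ) (hK : ∀ ρ ∈ F, ρ.1 ≤ K) (hK' : ∀ ρ ∈ F', ρ.1 ≤ K) :
    Tendsto (fun n : ℕ => (Nat.card {σ : Equiv.Perm (Fin n) //
          Avoids σ ∧ ∃ τ π : FinPerm,
            (⟨n, σ⟩ : FinPerm) = glue τ π ∧ (τ ∈ F ∨ π ∈ F')} : ℝ) / (catalan n : ℝ))
      atTop (𝓝 (∑ k ∈ Finset.range (K + 1),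
        ((Nat.card {ρ : FinPerm // ρ ∈ F ∧ ρ.1 = k} : ℝ) +
          (Nat.card {ρ : FinPerm // ρ ∈ F' ∧ ρ.1 = k} : ℝ)) * (4 : ℝ) ^ (-(k : ℤ) - 1))) := by

  classical
  have hcard : ∀ (G : Finset FinPerm) (k : ℕ),
      (Nat.card {ρ : FinPerm // ρ ∈ G ∧ ρ.1 = k}) = (G.filter (fun ρ => ρ.1 = k)).card := by
    intro G k
    have e : {ρ : FinPerm // ρ ∈ G ∧ ρ.1 = k} ≃ {ρ : FinPerm // ρ ∈ G.filter (fun ρ => ρ.1 = k)} :=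
      Equiv.subtypeEquivRight (fun ρ => (Finset.mem_filter (s := G) (p := fun ρ => ρ.1 = k) (a := ρ)).symm)
    rw [Nat.card_congr e]
    exact Nat.card_eq_finsetCard _
  have hpow : ∀ k : ℕ, (4 : ℝ) ^ (-(k : ℤ) - 1) = (1 / 4 : ℝ) ^ (k + 1) := by
    intro k
    rw [show -(k : ℤ) - 1 = -(((k + 1 : ℕ) : ℤ)) by push_cast; ring, zpow_neg, zpow_natCast,
      one_div, inv_pow]
  have hsum : Tendsto (fun n : ℕ => ∑ k ∈ Finset.range (K + 1),
      (((F.filter (fun ρ => ρ.1 = k)).card : ℝ) + ((F'.filter (fun ρ => ρ.1 = k)).card : ℝ))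
        * ((catalan (n - 1 - k) : ℝ) / (catalan n : ℝ))) atTop
      (𝓝 (∑ k ∈ Finset.range (K + 1),
        (((F.filter (fun ρ => ρ.1 = k)).card : ℝ) + ((F'.filter (fun ρ => ρ.1 = k)).card : ℝ))
          * (1 / 4 : ℝ) ^ (k + 1))) := by
    refine tendsto_finset_sum _ fun k _ => ?_
    exact (catalan_ratio_shift k).const_mul _
  have hlimval : (∑ k ∈ Finset.range (K + 1),
        ((Nat.card {ρ : FinPerm // ρ ∈ F ∧ ρ.1 = k} : ℝ) +
          (Nat.card {ρ : FinPerm // ρ ∈ F' ∧ ρ.1 = k} : ℝ)) * (4 : ℝ) ^ (-(k : ℤ) - 1))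
      = ∑ k ∈ Finset.range (K + 1),
        (((F.filter (fun ρ => ρ.1 = k)).card : ℝ) + ((F'.filter (fun ρ => ρ.1 = k)).card : ℝ))
          * (1 / 4 : ℝ) ^ (k + 1) := by
    refine Finset.sum_congr rfl fun k _ => ?_
    rw [hcard F k, hcard F' k, hpow k]
  rw [hlimval]
  refine Tendsto.congr' ?_ hsum
  filter_upwards [eventually_ge_atTop (2 * K + 2)] with n hn
  rw [event_count F F' hF hF' K hK hK' n hn]
  push_cast
  rw [Finset.sum_div]
  refine Finset.sum_congr rfl fun k _ => ?_
  ring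


end Av231
end
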